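/- arXiv:1306.0771 — 10 statements merged into one kernel-verified Lean document; each statement's English description precedes it below -/
import Mathlib

section
/- For odd n, the sequence W_n = a_1,a_0,a_2,a_0,...,a_{⌊n/2⌋},a_0,a_{⌈n/2⌉} (a_0 in every even position, all other items distinct) has naive-algorithm aggregate frequency n/4 + 3/(4n). -/
open scoped BigOperators

noncomputable section

/-- frequency of item `a` in sequence `I` -/
def freq (I : List ℕ) (a : ℕ) : ℝ := (I.count a : ℝ) / (I.length : ℝ)

/-- profit (aggregate frequency) of buffer sequence `S` against input `I` -/
def profit (I S : List ℕ) : ℝ := (S.map (freq I)).sum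

/-- Naive algorithm: buffers every arriving item. -/
def naiP (I : List ℕ) : ℝ := profit I I

/-- Buffers of the eager algorithm: buffer each arriving item until the first
repeated item (two equal consecutive items), then keep it forever. -/
def eagRun : List ℕ → List ℕ
  | [] => []
  | [x] => [x]
  | x :: y :: rest =>
      if x = y then x :: List.replicate (rest.length + 1) x
      else x :: eagRun (y :: rest)

def eagP (I : List ℕ) : ℝ := profit I (eagRun I)

/-- One step of the Majority algorithm on state (buffer, counter). -/
def majStep (s : ℕ × ℕ) (a : ℕ) : ℕ × ℕ :=
  if s.2 = 0 then (a, 1)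
  else if a = s.1 then (s.1, s.2 + 1)
  else (s.1, s.2 - 1)

def majBuffers (I : List ℕ) : List ℕ :=
  ((List.scanl majStep ((0 : ℕ), (0 : ℕ)) I).tail).map Prod.fst

def majP (I : List ℕ) : ℝ := profit I (majBuffers I)

/-- A valid offline buffer schedule: at each step the buffer holds either the
currently arriving item or the previously buffered item (the first buffered
item must be the first arriving item). -/
def ValidSched (I S : List ℕ) : Prop :=
  S.length = I.length ∧
    ∀ i, i < S.length →
      S.getD i 0 = I.getD i 0 ∨ (0 < i ∧ S.getD i 0 = S.getD (i - 1) 0)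

/-- Optimal offline profit. -/
def optP (I : List ℕ) : ℝ := sSup {x | ∃ S, ValidSched I S ∧ x = profit I S}

/-- Worst-permutation value of an algorithm's profit. -/
def worstP (f : List ℕ → ℝ) (I : List ℕ) : ℝ := sInf {x | ∃ J, J.Perm I ∧ x = f J}

/-- E_n = a,a,b,b,...,b with n-2 copies of b. -/
def Eseq (n a b : ℕ) : List ℕ := a :: a :: List.replicate (n - 2) b

/-- W_n = a_1,a_0,a_2,a_0,... with item 0 playing the role of a_0. -/
def Wseq (n : ℕ) : List ℕ :=
  ((List.range (n / 2)).flatMap fun i => [i + 1, 0]) ++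
    (if n % 2 = 1 then [n / 2 + 1] else [])

/-- W'_n = a_1,...,a_⌈n/2⌉,a_0,...,a_0 with ⌊n/2⌋ copies of a_0 = 0. -/
def Wseq' (n : ℕ) : List ℕ :=
  ((List.range ((n + 1) / 2)).map (· + 1)) ++ List.replicate (n / 2) 0

/-- I_n = ⌈n/2⌉ copies of a_0 = 0 followed by ⌊n/2⌋ distinct items. -/
def Iseq (n : ℕ) : List ℕ :=
  List.replicate ((n + 1) / 2) 0 ++ (List.range (n / 2)).map (· + 1)

/-- D(I): the items of `I` listed in nondecreasing order of frequency. -/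
def Dsort (I : List ℕ) : List ℕ :=
  List.insertionSort (fun x y => I.count x ≤ I.count y) I

/-- The interleaving permutation a'_1, a'_n, a'_2, a'_{n-1}, ... of a list. -/
def interleave : List ℕ → List ℕ
  | [] => []
  | x :: xs => x :: interleave xs.reverse
termination_by l => l.length
decreasing_by set_option linter.unnecessarySimpa false in simpa using Nat.lt_succ_self xs.length

/-- max over sequences of length n of f(I) - g(I). -/
def maxDiff (f g : List ℕ → ℝ) (n : ℕ) : ℝ :=
  sSup {d | ∃ I : List ℕ, I.length = n ∧ d = f I - g I}

/-- min over sequences of length n of f(I) - g(I). -/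
def minDiff (f g : List ℕ → ℝ) (n : ℕ) : ℝ :=
  sInf {d | ∃ I : List ℕ, I.length = n ∧ d = f I - g I}

/-- A deterministic online algorithm for the single-buffer frequent items
problem: the buffer after each nonempty prefix is either the arriving item or
the previous buffer content. -/
structure OnlineAlg where
  buf : List ℕ → ℕ
  first : ∀ x, buf [x] = x
  step : ∀ l x, l ≠ [] → buf (l ++ [x]) = x ∨ buf (l ++ [x]) = buf l

/-- Profit of an online algorithm on input `I`. -/
def oprofit (A : OnlineAlg) (I : List ℕ) : ℝ :=
  ∑ t ∈ Finset.range I.length, freq I (A.buf (I.take (t + 1)))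

end

lemma countL (k j : ℕ) :
    ((List.range k).flatMap fun i => [i + 1, 0]).count j
      = if j = 0 then k else if j ≤ k then 1 else 0 := by
  induction k with
  | zero => cases j <;> simp
  | succ k ih =>
    rw [List.range_succ, List.flatMap_append, List.count_append, ih]
    simp only [List.flatMap_cons, List.flatMap_nil, List.append_nil, List.count_cons,
      List.count_nil, beq_iff_eq]
    split_ifs <;> omega

lemma hWeq (k : ℕ) : Wseq (2*k+1) = ((List.range k).flatMap fun i => [i + 1, 0]) ++ [k+1] := by
  simp [Wseq, Nat.mul_add_mod, Nat.mul_add_div]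

lemma lenW (k : ℕ) : (Wseq (2*k+1)).length = 2*k+1 := by
  rw [hWeq]
  simp [List.length_flatMap, Function.comp_def, List.map_const', List.sum_replicate]
  omega

lemma countW (k j : ℕ) : (Wseq (2*k+1)).count j =
    (if j = 0 then k else if j ≤ k then 1 else 0) + (if j = k+1 then 1 else 0) := by
  rw [hWeq, List.count_append, countL]
  congr 1
  rcases eq_or_ne j (k+1) with h | h
  · subst h; simp
  · rw [if_neg h, List.count_eq_zero.mpr (by simp [h])]

lemma sumCounts (k : ℕ) :
    ((Wseq (2*k+1)).map (fun a => (Wseq (2*k+1)).count a)).sum = k^2 + k + 1 := by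
  have hmap := List.map_congr_left (l := Wseq (2*k+1))
    (f := fun a => (Wseq (2*k+1)).count a)
    (g := fun j => (if j = 0 then k else if j ≤ k then 1 else 0) + (if j = k+1 then 1 else 0))
    (fun a _ => countW k a)
  rw [hmap, hWeq, List.map_append, List.sum_append, List.map_flatMap]
  have h2 : ∀ i ∈ List.range k,
      (List.map (fun j => (if j = 0 then k else if j ≤ k then 1 else 0) +
        (if j = k+1 then 1 else 0)) [i+1, 0]) = [1, k] := by
    intro i hi
    simp only [List.mem_range] at hi
    simp only [List.map_cons, List.map_nil]
    rw [if_neg (by omega : ¬ i+1 = 0), if_pos (by omega : i+1 ≤ k),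
      if_neg (by omega : ¬ i+1 = k+1)]
    norm_num
  rw [List.flatMap_congr h2, List.flatMap_def, List.sum_flatten, List.map_map,
    Function.comp_def]
  simp only [List.sum_cons, List.sum_nil, List.map_const', List.length_range,
    List.sum_replicate, smul_eq_mul, List.map_cons, List.map_nil]
  rw [if_neg (by omega : ¬ k+1 ≤ k)]
  norm_num; ring

/-- for odd n, Nai(W_n) = n/4 + 3/(4n). -/
theorem stmt3 (n : ℕ) (ho : Odd n) :
    naiP (Wseq n) = (n : ℝ) / 4 + 3 / (4 * n) := by
  obtain ⟨k, hk⟩ := ho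
  subst hk
  have hn : ((2*k+1 : ℕ) : ℝ) ≠ 0 := by positivity
  unfold naiP profit freq
  rw [lenW]
  have : (Wseq (2*k+1)).map (fun a => ((Wseq (2*k+1)).count a : ℝ) / ((2*k+1 : ℕ) : ℝ))
      = (Wseq (2*k+1)).map (fun a => ((Wseq (2*k+1)).count a : ℝ) * (((2*k+1 : ℕ) : ℝ))⁻¹) := by
    simp [div_eq_mul_inv]
  rw [this, List.sum_map_mul_right]
  have hc : (List.map (fun a => ((Wseq (2*k+1)).count a : ℝ)) (Wseq (2*k+1))).sum
      = ((k : ℝ)^2 + k + 1) := by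
    have h2 : (((List.map (fun a => (Wseq (2*k+1)).count a) (Wseq (2*k+1))).sum : ℕ) : ℝ)
        = ((k : ℝ)^2 + k + 1) := by rw [sumCounts]; push_cast; ring
    rw [Nat.cast_list_sum, List.map_map, Function.comp_def] at h2
    exact h2
  rw [hc]
  have hk2 : ((2*k+1 : ℕ) : ℝ) = 2*(k:ℝ)+1 := by push_cast; ring
  rw [hk2]
  have h1 : (2*(k:ℝ)+1) ≠ 0 := by positivity
  field_simp
  ring
end

section
/- For the sequence W_n (a_0 in every even position, all other items distinct, n ≥ 2), the aggregate frequency of the majority algorithm equals 1. -/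
open scoped BigOperators

lemma scanl_pairs (m : ℕ) : ∀ s b, List.scanl majStep (b,0) ((List.range' s m).flatMap fun i => [i+1,0]) = (b,0) :: ((List.range' s m).flatMap fun i => [(i+1,1),(i+1,0)]) := by
  induction m with
  | zero => intro s b; simp [List.scanl]
  | succ m ih =>
    intro s b
    rw [List.range'_succ]
    simp only [List.flatMap_cons, List.cons_append, List.scanl_cons, List.nil_append]
    have h1 : majStep (b,0) (s+1) = (s+1,1) := by simp [majStep]
    have h2 : majStep (s+1,1) 0 = (s+1,0) := by simp [majStep]
    rw [h1, h2, ih (s+1) (s+1)]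

lemma scanl_pairs' (m : ℕ) (s b x : ℕ) : List.scanl majStep (b,0) (((List.range' s m).flatMap fun i => [i+1,0]) ++ [x]) = ((b,0) :: ((List.range' s m).flatMap fun i => [(i+1,1),(i+1,0)])) ++ [(x,1)] := by
  induction m generalizing s b with
  | zero => simp [List.scanl, majStep]
  | succ m ih =>
    rw [List.range'_succ]
    simp only [List.flatMap_cons, List.cons_append, List.append_assoc, List.scanl_cons, List.nil_append]
    have h1 : majStep (b,0) (s+1) = (s+1,1) := by simp [majStep]
    have h2 : majStep (s+1,1) 0 = (s+1,0) := by simp [majStep]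
    rw [h1, h2]
    have := ih (s+1) (s+1)
    rw [this]
    simp

lemma count_pairs (a : ℕ) (ha : a ≠ 0) (m : ℕ) : ∀ s, (((List.range' s m).flatMap fun i => [i+1,0]).count a) = if s < a ∧ a ≤ s + m then 1 else 0 := by
  induction m with
  | zero => intro s; rw [if_neg (by omega)]; simp
  | succ m ih =>
    intro s
    rw [List.range'_succ]
    simp only [List.flatMap_cons, List.cons_append, List.count_cons, List.count_append]
    rw [ih (s+1)]
    simp only [List.count_nil, List.nil_append, beq_iff_eq]
    split_ifs <;> omega

lemma len_flatMap2 (f : ℕ → List ℕ) (h : ∀ i, (f i).length = 2) :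
    ∀ l : List ℕ, (l.flatMap f).length = 2 * l.length := by
  intro l
  induction l with
  | nil => simp
  | cons x xs ih => simp [ih, h x]; omega

lemma length_W (n : ℕ) : (Wseq n).length = n := by
  rw [Wseq, List.length_append, len_flatMap2 (fun i => [i+1,0]) (fun _ => rfl)]
  by_cases hp : n % 2 = 1 <;> simp [hp] <;> omega

lemma count_W (n a : ℕ) (ha : a ≠ 0) :
    (Wseq n).count a =
      (if 0 < a ∧ a ≤ n / 2 then 1 else 0) +
        (if n % 2 = 1 ∧ a = n / 2 + 1 then 1 else 0) := by
  rw [Wseq, List.count_append, List.range_eq_range', count_pairs a ha]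
  congr 1
  · simp
  · by_cases hp : n % 2 = 1
    · rw [if_pos hp]
      by_cases h : a = n / 2 + 1 <;> simp [h, hp, List.count_cons] <;> omega
    · rw [if_neg hp]; simp [hp]

lemma majBuffers_W (n : ℕ) : majBuffers (Wseq n) =
    ((List.range (n / 2)).flatMap fun i => [i + 1, i + 1]) ++
      (if n % 2 = 1 then [n / 2 + 1] else []) := by
  rw [majBuffers, Wseq, List.range_eq_range']
  by_cases hp : n % 2 = 1
  · rw [if_pos hp, scanl_pairs' (n / 2) 0 0 (n / 2 + 1)]
    simp [List.map_flatMap]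
  · rw [if_neg hp, List.append_nil, List.append_nil, scanl_pairs (n / 2) 0 0]
    simp [List.map_flatMap]

/-- Maj(W_n) = 1. -/
theorem stmt4 (n : ℕ) (hn : 2 ≤ n) :
    majP (Wseq n) = 1 := by
  have hlen : (Wseq n).length = n := length_W n
  have hn0 : (n : ℝ) ≠ 0 := by positivity
  have hS := majBuffers_W n
  have hall : ∀ x ∈ (majBuffers (Wseq n)).map (freq (Wseq n)), x = 1 / (n : ℝ) := by
    intro x hx
    simp only [List.mem_map] at hx
    obtain ⟨a, ha, rfl⟩ := hx
    rw [hS, List.mem_append] at ha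
    have h1 : (Wseq n).count a = 1 := by
      rcases ha with h | h
      · rw [List.mem_flatMap] at h
        obtain ⟨i, hi, hai⟩ := h
        rw [List.mem_range] at hi
        simp only [List.mem_cons, List.not_mem_nil, or_false] at hai
        have hai' : a = i + 1 := by tauto
        rw [count_W n a (by omega)]
        split_ifs <;> omega
      · by_cases hp : n % 2 = 1
        · rw [if_pos hp] at h
          simp only [List.mem_singleton] at h
          rw [count_W n a (by omega)]
          split_ifs <;> omega
        · rw [if_neg hp] at h; simp at h
    rw [freq, h1, hlen]
    norm_num
  have hSlen : (majBuffers (Wseq n)).length = n := by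
    rw [hS, List.length_append, len_flatMap2 (fun i => [i+1,i+1]) (fun _ => rfl)]
    by_cases hp : n % 2 = 1 <;> simp [hp, List.length_range] <;> omega
  rw [majP, profit, List.sum_eq_card_nsmul _ _ hall, List.length_map, hSlen, nsmul_eq_mul]
  field_simp
end

section
/- For the sequence E_n = a,a,b,...,b (n-2 copies of b, a ≠ b, n ≥ 4), the aggregate frequency of the majority algorithm equals n - 6 + 16/n. -/
open scoped BigOperators

lemma maj_run_b (b : ℕ) : ∀ k c,
    ((List.scanl majStep (b, c + 1) (List.replicate k b)).map Prod.fst)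
      = List.replicate (k + 1) b := by
  intro k
  induction k with
  | zero => intro c; simp
  | succ k ih =>
      intro c
      have : majStep (b, c + 1) b = (b, c + 2) := by simp [majStep]
      simp [List.replicate_succ, List.scanl_cons, this, ih (c + 1)]

lemma maj_run_b0 (a b : ℕ) : ∀ m,
    ((List.scanl majStep (a, 0) (List.replicate m b)).map Prod.fst)
      = a :: List.replicate m b := by
  intro m
  cases m with
  | zero => simp
  | succ m =>
      have : majStep (a, 0) b = (b, 1) := by simp [majStep]
      simp [List.replicate_succ, List.scanl_cons, this, maj_run_b b m 0]

lemma majBuffers_E (n a b : ℕ) (hab : a ≠ b) (hn : 4 ≤ n) :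
    majBuffers (Eseq n a b) = a :: a :: a :: a :: List.replicate (n - 4) b := by
  obtain ⟨m, hm⟩ : ∃ m, n = m + 4 := ⟨n - 4, by omega⟩
  subst hm
  have h2 : m + 4 - 2 = (m + 2) := by omega
  have h4 : m + 4 - 4 = m := by omega
  rw [h4]
  have s1 : majStep ((0 : ℕ), (0 : ℕ)) a = (a, 1) := by simp [majStep]
  have s2 : majStep (a, 1) a = (a, 2) := by simp [majStep]
  have s3 : majStep (a, 2) b = (a, 1) := by simp [majStep, hab.symm]
  have s4 : majStep (a, 1) b = (a, 0) := by simp [majStep, hab.symm]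
  simp [majBuffers, Eseq, h2, List.replicate_succ, List.scanl_cons,
    s1, s2, s3, s4, maj_run_b0 a b m]

/-- Maj(E_n) = n - 6 + 16/n. -/
theorem stmt5 (n a b : ℕ) (hab : a ≠ b) (hn : 4 ≤ n) :
    majP (Eseq n a b) = (n : ℝ) - 6 + 16 / n := by
  have hlen : (Eseq n a b).length = n := by
    simp [Eseq]; omega
  have hca : (Eseq n a b).count a = 2 := by
    simp [Eseq, List.count_cons, List.count_replicate, hab, Ne.symm hab]
  have hcb : (Eseq n a b).count b = n - 2 := by
    simp [Eseq, List.count_cons, List.count_replicate, hab, Ne.symm hab]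
  have hfa : freq (Eseq n a b) a = 2 / n := by
    simp [freq, hca, hlen]
  have hfb : freq (Eseq n a b) b = ((n : ℝ) - 2) / n := by
    have : ((n - 2 : ℕ) : ℝ) = (n : ℝ) - 2 := by
      push_cast [Nat.cast_sub (by omega : 2 ≤ n)]; ring
    simp [freq, hcb, hlen, this]
  rw [majP, majBuffers_E n a b hab hn]
  have hm : ((n - 4 : ℕ) : ℝ) = (n : ℝ) - 4 := by
    push_cast [Nat.cast_sub (by omega : 4 ≤ n)]; ring
  simp [profit, hfa, hfb, List.map_replicate, List.sum_replicate, nsmul_eq_mul, hm]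
  have hn0 : (n : ℝ) ≠ 0 := by positivity
  field_simp
  ring
end

section
/- For even n, the optimal offline aggregate frequency on W_n equals n/2 - 1/2 + 1/n, and for odd n it equals n/2 - 1 + 3/(2n). -/
open scoped BigOperators

namespace Stmt6Aux

def F (m : ℕ) : List ℕ := (List.range m).flatMap fun i => [i + 1, 0]

lemma lenF (m : ℕ) : (F m).length = 2 * m := by
  induction m with
  | zero => simp [F]
  | succ m ih => simp [F, List.range_succ] at ih ⊢; omega

lemma countF0 (m : ℕ) : (F m).count 0 = m := by
  induction m with
  | zero => simp [F]
  | succ m ih => simp [F, List.range_succ, List.count_append, List.count_cons] at ih ⊢; omega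

lemma countF (m a : ℕ) (ha : a ≠ 0) : (F m).count a = if a ≤ m then 1 else 0 := by
  induction m with
  | zero => simp [F, Nat.le_zero, ha]
  | succ m ih =>
      simp only [F, List.range_succ, List.flatMap_append] at ih ⊢
      rw [List.count_append, ih]
      simp [List.count_cons, ha, Ne.symm ha]
      split_ifs <;> omega

lemma headF (m : ℕ) (hm : 1 ≤ m) : ∃ t, F m = 1 :: 0 :: t := by
  induction m with
  | zero => omega
  | succ m ih =>
      rcases Nat.eq_or_lt_of_le hm with h | h
      · exact ⟨[], by simp [F, ← h, List.range_succ]⟩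
      · obtain ⟨t, ht⟩ := ih (by omega)
        refine ⟨t ++ [m + 1, 0], ?_⟩
        simp only [F, List.range_succ, List.flatMap_append] at ht ⊢
        rw [ht]
        simp

lemma lenW (n : ℕ) : (Wseq n).length = n := by
  have := lenF (n / 2)
  unfold Wseq
  rw [List.length_append]
  show (F (n / 2)).length + _ = n
  rcases Nat.even_or_odd n with h | h
  · obtain ⟨k, hk⟩ := h
    simp only [hk]
    have : (2 * k) % 2 = 0 := by omega
    rw [show k + k = 2 * k by ring] at *
    simp_all
  · obtain ⟨k, hk⟩ := h
    have h1 : n % 2 = 1 := by omega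
    simp_all
    omega

lemma headW (n : ℕ) (hn : 2 ≤ n) : ∃ t, Wseq n = 1 :: 0 :: t := by
  obtain ⟨t, ht⟩ := headF (n / 2) (by omega)
  exact ⟨t ++ (if n % 2 = 1 then [n / 2 + 1] else []), by
    unfold Wseq
    rw [show ((List.range (n/2)).flatMap fun i => [i+1,0]) = F (n/2) from rfl, ht]
    rfl⟩

lemma countW0 (n : ℕ) : (Wseq n).count 0 = n / 2 := by
  unfold Wseq
  rw [List.count_append]
  show (F (n / 2)).count 0 + _ = n / 2
  rw [countF0]
  split <;> simp

lemma countW_le (n a : ℕ) (hn : 2 ≤ n) : (Wseq n).count a ≤ n / 2 := by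
  rcases eq_or_ne a 0 with rfl | ha
  · exact (countW0 n).le
  · unfold Wseq
    rw [List.count_append]
    show (F (n / 2)).count a + _ ≤ n / 2
    rw [countF _ _ ha]
    have h2 : 1 ≤ n / 2 := by omega
    split_ifs with hle <;>
      simp only [List.count_singleton', List.count_nil] <;>
        first
          | (split_ifs <;> omega)
          | omega

lemma getD_replicate_zero (k j : ℕ) : (List.replicate k (0 : ℕ)).getD j 0 = 0 := by
  induction k generalizing j with
  | zero => simp
  | succ k ih => cases j <;> simp [List.replicate_succ, ih]

lemma freqW0 (n : ℕ) : freq (Wseq n) 0 = (n / 2 : ℕ) / (n : ℝ) := by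
  rw [freq, countW0, lenW]

lemma freqW1 (n : ℕ) (hn : 2 ≤ n) : freq (Wseq n) 1 = 1 / (n : ℝ) := by
  have h : (Wseq n).count 1 = 1 := by
    unfold Wseq
    rw [List.count_append]
    show (F (n / 2)).count 1 + _ = 1
    rw [countF _ _ one_ne_zero, if_pos (by omega)]
    split <;> simp_all [List.count_cons, List.count_nil] <;> omega
  rw [freq, h, lenW]; norm_num

lemma freqW_le (n a : ℕ) (hn : 2 ≤ n) : freq (Wseq n) a ≤ (n / 2 : ℕ) / (n : ℝ) := by
  rw [freq, lenW]
  apply div_le_div_of_nonneg_right _ (by positivity)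
  exact_mod_cast countW_le n a hn

lemma optW (n : ℕ) (hn : 2 ≤ n) :
    optP (Wseq n) = 1 / (n : ℝ) + ((n : ℝ) - 1) * ((n / 2 : ℕ) / (n : ℝ)) := by
  set I := Wseq n
  set v : ℝ := 1 / (n : ℝ) + ((n : ℝ) - 1) * ((n / 2 : ℕ) / (n : ℝ)) with hv
  obtain ⟨t, ht⟩ := headW n hn
  have hI0 : I.getD 0 0 = 1 := by rw [show I = Wseq n from rfl, ht]; rfl
  have hI1 : I.getD 1 0 = 0 := by rw [show I = Wseq n from rfl, ht]; rfl
  apply IsGreatest.csSup_eq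
  constructor
  · refine ⟨1 :: List.replicate (n - 1) 0, ⟨?_, ?_⟩, ?_⟩
    · show _ = (Wseq n).length
      rw [lenW]
      simp
      omega
    · intro i hi
      match i with
      | 0 => left; exact hI0.symm
      | 1 =>
          left
          rw [hI1]
          cases h : n - 1 with
          | zero => omega
          | succ k => simp [h, List.replicate_succ]
      | (j + 2) =>
          right
          refine ⟨by omega, ?_⟩
          simp [getD_replicate_zero]
    · rw [profit]
      simp only [List.map_cons, List.map_replicate, List.sum_cons, List.sum_replicate,
        nsmul_eq_mul]
      rw [freqW1 n hn, freqW0 n, hv]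
      have : ((n - 1 : ℕ) : ℝ) = (n : ℝ) - 1 := by
        have : (1 : ℕ) ≤ n := by omega
        push_cast [Nat.cast_sub this]; ring
      rw [this]
  · rintro x ⟨S, ⟨hlen, hval⟩, rfl⟩
    have hSlen : S.length = n := by rw [hlen, lenW]
    obtain ⟨s, T, rfl⟩ : ∃ s T, S = s :: T := by
      cases S with
      | nil => exfalso; simp at hSlen; omega
      | cons a l => exact ⟨a, l, rfl⟩
    have hs : s = 1 := by
      have := hval 0 (by omega)
      rcases this with h | h
      · exact h.trans hI0
      · omega
    have hT : T.length = n - 1 := by simp at hSlen; omega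
    rw [profit, hs]
    simp only [List.map_cons, List.sum_cons]
    rw [freqW1 n hn, hv]
    gcongr
    calc (T.map (freq I)).sum ≤ (T.map (freq I)).length • ((n / 2 : ℕ) / (n : ℝ)) := by
          apply List.sum_le_card_nsmul
          rintro x hx
          obtain ⟨a, _, rfl⟩ := List.mem_map.mp hx
          exact freqW_le n a hn
      _ = ((n : ℝ) - 1) * ((n / 2 : ℕ) / (n : ℝ)) := by
          rw [List.length_map, hT, nsmul_eq_mul]
          congr 1
          have : (1 : ℕ) ≤ n := by omega
          push_cast [Nat.cast_sub this]; ring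

end Stmt6Aux

/-- Opt(W_n) = n/2 - 1/2 + 1/n for even n, and n/2 - 1 + 3/(2n) for odd n. -/
theorem stmt6 (n : ℕ) (hn : 2 ≤ n) :
    (Even n → optP (Wseq n) = (n : ℝ) / 2 - 1 / 2 + 1 / n) ∧
    (Odd n → optP (Wseq n) = (n : ℝ) / 2 - 1 + 3 / (2 * n)) := by
  have hopt := Stmt6Aux.optW n hn
  have hn0 : (n : ℝ) ≠ 0 := by positivity
  constructor
  · intro he
    obtain ⟨k, hk⟩ := he
    have hdiv : n / 2 = k := by omega
    have hcast : ((n / 2 : ℕ) : ℝ) = (n : ℝ) / 2 := by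
      rw [hdiv]
      have : (n : ℝ) = 2 * k := by exact_mod_cast (by omega : n = 2 * k)
      rw [this]; ring
    rw [hopt, hcast]
    field_simp
    ring
  · intro ho
    obtain ⟨k, hk⟩ := ho
    have hdiv : n / 2 = k := by omega
    have hcast : ((n / 2 : ℕ) : ℝ) = ((n : ℝ) - 1) / 2 := by
      rw [hdiv]
      have : (n : ℝ) = 2 * k + 1 := by exact_mod_cast hk
      rw [this]; ring
    rw [hopt, hcast]
    field_simp
    ring
end

section
/- For any input I of length n and for the worst-case permutation of I for the majority algorithm, the aggregate frequency of Maj equals 2·Σ_{i=1}^{⌊n/2⌋} f_I(a'_i) + (n mod 2)·f_I(a'_{⌈n/2⌉}), where a'_1,...,a'_n lists the items of I in nondecreasing order of frequency; in particular, at least ⌈n/2⌉ time steps contribute and this minimum is achieved by the interleaving permutation a'_1, a'_n, a'_2, a'_{n-1}, .... -/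
open scoped BigOperators

section Aux
def bufFrom : ℕ × ℕ → List ℕ → List ℕ
  | _, [] => []
  | s, a :: N => (majStep s a).1 :: bufFrom (majStep s a) N

lemma bufFrom_eq (s : ℕ × ℕ) (N : List ℕ) :
    bufFrom s N = ((List.scanl majStep s N).tail).map Prod.fst := by
  induction N generalizing s with
  | nil => simp [bufFrom]
  | cons a N ih =>
      rw [List.scanl_cons]
      simp only [List.cons_append, List.nil_append, List.tail_cons, bufFrom]
      rw [ih]
      cases N with
      | nil => simp
      | cons b M => rw [List.scanl_cons]; simp

lemma majBuffers_eq (J : List ℕ) : majBuffers J = bufFrom (0,0) J := by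
  rw [bufFrom_eq]; rfl

lemma length_bufFrom (s : ℕ × ℕ) (N : List ℕ) : (bufFrom s N).length = N.length := by
  induction N generalizing s with
  | nil => rfl
  | cons a N ih => simp [bufFrom, ih]

lemma count_bufFrom (s : ℕ × ℕ) (N : List ℕ) (a : ℕ) :
    (bufFrom s N).count a + (if a = (List.foldl majStep s N).1 then (List.foldl majStep s N).2 else 0)
      ≤ 2 * N.count a + (if a = s.1 then s.2 else 0) := by
  induction N generalizing s with
  | nil => simp [bufFrom]; exact le_of_eq (if_congr Iff.rfl rfl rfl)
  | cons x N ih =>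
      rcases s with ⟨b, k⟩
      have h := ih (majStep (b, k) x)
      simp only [bufFrom, List.foldl_cons, List.count_cons, beq_iff_eq] at *
      revert h
      simp only [majStep]
      split_ifs <;> intro h <;> omega

end Aux
section Aux2
/-- cost of one buffer list under weight `c` -/
def wsum (c : ℕ → ℕ) (S : List ℕ) : ℕ := (S.map c).sum

lemma profit_eq_wsum (I S : List ℕ) :
    profit I S = (wsum I.count S : ℝ) / (I.length : ℝ) := by
  induction S with
  | nil => simp [profit, wsum]
  | cons x S ih =>
      simp only [profit, wsum, List.map_cons, List.sum_cons] at *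
      rw [ih]
      push_cast
      rw [add_div]
      rfl

lemma interleave_perm : ∀ l : List ℕ, (interleave l).Perm l
  | [] => by rw [interleave]
  | x :: xs => by
      rw [interleave]
      exact ((interleave_perm xs.reverse).trans xs.reverse_perm).cons x
termination_by l => l.length
decreasing_by simpa using Nat.lt_succ_self xs.length

lemma dsort_perm (I : List ℕ) : (Dsort I).Perm I := List.perm_insertionSort _ I

lemma dsort_sorted (I : List ℕ) :
    (Dsort I).Pairwise (fun x y => I.count x ≤ I.count y) := by
  have : Std.Total (fun x y => I.count x ≤ I.count y) := ⟨fun a b => Nat.le_total _ _⟩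
  have : IsTrans ℕ (fun x y => I.count x ≤ I.count y) := ⟨fun a b c => Nat.le_trans⟩
  exact List.pairwise_insertionSort _ I

/-- sum of the first `k` entries of the "doubled" list -/
lemma sum_take_doubled (c : ℕ → ℕ) : ∀ (v : List ℕ) (k : ℕ), k ≤ 2 * v.length →
    (((v.flatMap fun b => [b, b]).map c).take k).sum =
      2 * ∑ i ∈ Finset.range (k / 2), c (v.getD i 0) + (k % 2) * c (v.getD (k / 2) 0)
  | v, 0, _ => by simp
  | [], (k+1), h => by simp at h
  | (b :: v), 1, _ => by simp
  | (b :: v), (k+2), h => by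
      have hk : k ≤ 2 * v.length := by simp at h; omega
      have ih := sum_take_doubled c v k hk
      simp only [List.flatMap_cons, List.map_append, List.map_cons, List.map_nil,
        List.cons_append, List.nil_append, List.take_succ_cons, List.sum_cons]
      rw [ih]
      have h2 : (k + 2) / 2 = k / 2 + 1 := by omega
      have h3 : (k + 2) % 2 = k % 2 := by omega
      rw [h2, h3, Finset.sum_range_succ']
      simp only [List.getD_cons_succ, List.getD_cons_zero]
      ring
end Aux2
section AuxB

lemma take_cons_sum_le : ∀ (w : List ℕ) (k x : ℕ), (∀ y ∈ w, x ≤ y) →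
    w.Pairwise (· ≤ ·) → k ≤ w.length → ((x :: w).take k).sum ≤ (w.take k).sum
  | _, 0, _, _, _, _ => by simp
  | [], (k+1), x, _, _, h => by simp at h
  | (y :: w'), (k+1), x, hle, hs, h => by
      simp only [List.take_succ_cons, List.sum_cons]
      have hxy : x ≤ y := hle y (by simp)
      have hyw : ∀ z ∈ w', y ≤ z := fun z hz => (List.pairwise_cons.mp hs).1 z hz
      have hs' : w'.Pairwise (· ≤ ·) := (List.pairwise_cons.mp hs).2
      have hlen : k ≤ w'.length := by simpa using h
      have := take_cons_sum_le w' k y hyw hs' hlen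
      omega

lemma multiset_take_sum_le : ∀ (w : List ℕ) (u : Multiset ℕ), w.Pairwise (· ≤ ·) →
    u ≤ (w : Multiset ℕ) → (w.take (Multiset.card u)).sum ≤ u.sum
  | [], u, _, hu => by
      have : u = 0 := Multiset.le_zero.mp (by simpa using hu)
      simp [this]
  | (x :: w'), u, hs, hu => by
      by_cases hx : x ∈ u
      · obtain ⟨u', rfl⟩ := Multiset.exists_cons_of_mem hx
        have hu' : u' ≤ (w' : Multiset ℕ) := by
          have : (x ::ₘ u') ≤ x ::ₘ (w' : Multiset ℕ) := by
            simpa using hu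
          exact (Multiset.cons_le_cons_iff x).mp this
        have ih := multiset_take_sum_le w' u' (List.pairwise_cons.mp hs).2 hu'
        simp only [Multiset.card_cons, List.take_succ_cons, List.sum_cons, Multiset.sum_cons]
        omega
      · have hu' : u ≤ (w' : Multiset ℕ) := by
          rw [Multiset.le_iff_count] at hu ⊢
          intro a
          have := hu a
          by_cases hax : a = x
          · subst hax
            have : Multiset.count a u = 0 := by
              simpa [Multiset.count_eq_zero] using hx
            simp [this]
          · simpa [Multiset.count_cons, hax, List.count_cons, Ne.symm hax] using this
        have ih := multiset_take_sum_le w' u (List.pairwise_cons.mp hs).2 hu'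
        have hcard : Multiset.card u ≤ w'.length := by
          simpa using Multiset.card_le_card hu'
        have := take_cons_sum_le w' (Multiset.card u) x
          (fun y hy => (List.pairwise_cons.mp hs).1 y hy) (List.pairwise_cons.mp hs).2 hcard
        omega

lemma count_flatMap_dup (L : List ℕ) (a : ℕ) :
    (L.flatMap fun b => [b, b]).count a = 2 * L.count a := by
  induction L with
  | nil => simp
  | cons b L ih =>
      simp only [List.flatMap_cons, List.count_append, ih, List.count_cons]
      by_cases hab : b = a <;> simp [hab, List.count_cons] <;> omega

lemma sorted_dup {r : ℕ → ℕ → Prop} (hr : ∀ x, r x x) :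
    ∀ (L : List ℕ), L.Pairwise r → (L.flatMap fun b => [b, b]).Pairwise r
  | [], _ => by simp
  | (b :: L), hs => by
      have h1 := (List.pairwise_cons.mp hs).1
      have ih := sorted_dup hr L (List.pairwise_cons.mp hs).2
      simp only [List.flatMap_cons, List.cons_append, List.nil_append]
      have hmem : ∀ y ∈ L.flatMap fun b => [b, b], r b y := by
        intro y hy
        simp only [List.mem_flatMap] at hy
        obtain ⟨z, hz, hyz⟩ := hy
        simp only [List.mem_cons, List.not_mem_nil, or_false, List.mem_singleton] at hyz
        rcases hyz with rfl | rfl <;> exact h1 _ hz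
      refine List.pairwise_cons.mpr ⟨?_, List.pairwise_cons.mpr ⟨hmem, ih⟩⟩
      intro y hy
      rcases List.mem_cons.mp hy with rfl | hy'
      · exact hr _
      · exact hmem y hy'

/-- Lemma B: greedy lower bound. -/
lemma wsum_lower (c : ℕ → ℕ) (L S : List ℕ)
    (hs : L.Pairwise (fun x y => c x ≤ c y))
    (hcount : ∀ a, S.count a ≤ 2 * L.count a) :
    ((((L.flatMap fun b => [b, b]).map c)).take S.length).sum ≤ wsum c S := by
  set w : List ℕ := (L.flatMap fun b => [b, b]).map c with hw
  have hws : w.Pairwise (· ≤ ·) := by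
    apply List.Pairwise.map
    · exact fun a b h => h
    · exact sorted_dup (r := fun x y => c x ≤ c y) (fun x => le_refl (c x)) L hs
  have hle : ((S.map c : List ℕ) : Multiset ℕ) ≤ (w : Multiset ℕ) := by
    rw [hw]
    have hSle : ((S : Multiset ℕ)) ≤ ((L.flatMap fun b => [b, b] : List ℕ) : Multiset ℕ) := by
      rw [Multiset.le_iff_count]
      intro a
      simpa [count_flatMap_dup] using hcount a
    simpa using Multiset.map_le_map (f := c) hSle
  have := multiset_take_sum_le w ((S.map c : List ℕ) : Multiset ℕ) hws hle
  simpa [wsum] using this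

end AuxB
section AuxU

lemma majStep_zero (b a : ℕ) : majStep (b, 0) a = (a, 1) := by simp [majStep]

lemma majStep_self (b k : ℕ) (hk : k ≠ 0) : majStep (b, k) b = (b, k + 1) := by
  simp [majStep, hk]

lemma majStep_other (b k a : ℕ) (hk : k ≠ 0) (ha : a ≠ b) :
    majStep (b, k) a = (b, k - 1) := by simp [majStep, hk, ha]

def pairSumD (c : ℕ → ℕ) (M : List ℕ) : ℕ :=
  (((M.flatMap fun b => [b, b]).map c).take M.length).sum

lemma length_flatMap_dup (M : List ℕ) : (M.flatMap fun b => [b, b]).length = 2 * M.length := by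
  induction M with
  | nil => simp
  | cons b M ih => simp [List.flatMap_cons, ih]; omega

lemma pairSumD_single (c : ℕ → ℕ) (x : ℕ) : pairSumD c [x] = c x := by
  simp [pairSumD]

lemma pairSumD_cons_concat (c : ℕ → ℕ) (x y : ℕ) (M' : List ℕ) :
    pairSumD c (x :: (M' ++ [y])) = 2 * c x + pairSumD c M' := by
  have hlen : (x :: (M' ++ [y])).length = M'.length + 2 := by simp
  have hfm : ((x :: (M' ++ [y])).flatMap fun b => [b, b]) =
      x :: x :: ((M'.flatMap fun b => [b, b]) ++ [y, y]) := by
    simp [List.flatMap_cons, List.flatMap_append]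
  rw [pairSumD, hfm, hlen]
  simp only [List.map_cons, List.take_succ_cons, List.sum_cons, List.map_append]
  rw [List.take_append_of_le_length (by rw [List.length_map, length_flatMap_dup]; omega)]
  rw [pairSumD]
  ring

lemma lemU (c : ℕ → ℕ) : ∀ (n : ℕ) (M : List ℕ), M.length ≤ n →
    M.Pairwise (fun u v => c u ≤ c v) → ∀ b k : ℕ,
    (k = 0 ∨ ∀ m ∈ M, c m = c b) →
    wsum c (bufFrom (b, k) (interleave M)) ≤ pairSumD c M := by
  intro n
  induction n with
  | zero =>
      intro M hM _ b k _
      have : M = [] := List.length_eq_zero_iff.mp (Nat.le_zero.mp hM)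
      subst this
      rw [interleave]
      simp [bufFrom, wsum, pairSumD]
  | succ n ih =>
      intro M hlen hsort b k hinv
      rcases M with _ | ⟨x, xs⟩
      · rw [interleave]; simp [bufFrom, wsum, pairSumD]
      rcases hxs : xs.reverse with _ | ⟨y, ys⟩
      · have hxs' : xs = [] := by simpa using congrArg List.reverse hxs
        subst hxs'
        rw [interleave]
        simp only [List.reverse_nil]
        rw [interleave]
        have hps : pairSumD c [x] = c x := pairSumD_single c x
        rcases hinv with hk | hA
        · subst hk
          simp [bufFrom, wsum, majStep_zero, hps]
        · have hbx : c x = c b := hA x (by simp)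
          by_cases hk : k = 0
          · subst hk; simp [bufFrom, wsum, majStep_zero, hps]
          · by_cases hxb : x = b
            · subst hxb
              simp [bufFrom, wsum, majStep_self _ _ hk, hps]
            · simp [bufFrom, wsum, majStep_other _ _ _ hk hxb, hps, hbx]
      · have hxs2 : xs = ys.reverse ++ [y] := by
          have := congrArg List.reverse hxs
          simpa using this
        subst hxs2
        set M' := ys.reverse with hM'def
        -- sorted facts
        have hcons := List.pairwise_cons.mp hsort
        have hx_all : ∀ m ∈ M' ++ [y], c x ≤ c m := hcons.1
        have htriple := List.pairwise_append.mp hcons.2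
        have hM'sorted : M'.Pairwise (fun u v => c u ≤ c v) := htriple.1
        have hM'y : ∀ m ∈ M', c m ≤ c y := fun m hm => htriple.2.2 m hm y (by simp)
        have hxy : c x ≤ c y := hx_all y (by simp)
        have hxM' : ∀ m ∈ M', c x ≤ c m := fun m hm => hx_all m (List.mem_append_left _ hm)
        -- unfold the first two steps of the run
        rw [interleave, hxs, interleave]
        rcases hs2 : majStep (majStep (b, k) x) y with ⟨b2, k2⟩
        have key : c (majStep (b, k) x).1 + c b2 ≤ 2 * c x ∧
            (k2 = 0 ∨ ∀ m ∈ M', c m = c b2) := by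
          by_cases hk : k = 0
          · subst hk
            rw [majStep_zero] at hs2 ⊢
            by_cases hyx : y = x
            · subst hyx
              rw [majStep_self _ _ one_ne_zero] at hs2
              simp only [Prod.mk.injEq] at hs2
              obtain ⟨rfl, rfl⟩ := hs2
              refine ⟨by simp; omega, Or.inr fun m hm => le_antisymm (hM'y m hm) (hxM' m hm)⟩
            · rw [majStep_other _ _ _ one_ne_zero hyx] at hs2
              simp only [Prod.mk.injEq] at hs2
              obtain ⟨rfl, rfl⟩ := hs2
              exact ⟨by simp; omega, Or.inl rfl⟩
          · have hA := hinv.resolve_left hk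
            have hcxb : c x = c b := hA x (by simp)
            have hcyb : c y = c b := hA y (by simp)
            have hAM' : ∀ m ∈ M', c m = c b := fun m hm => hA m (by simp [hm])
            by_cases hxb : x = b
            · subst hxb
              rw [majStep_self _ _ hk] at hs2 ⊢
              by_cases hyb : y = x
              · subst hyb
                rw [majStep_self _ _ (by omega)] at hs2
                simp only [Prod.mk.injEq] at hs2
                obtain ⟨rfl, rfl⟩ := hs2
                exact ⟨by simp; omega, Or.inr hAM'⟩
              · rw [majStep_other _ _ _ (by omega) hyb] at hs2
                simp only [Prod.mk.injEq] at hs2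
                obtain ⟨rfl, rfl⟩ := hs2
                exact ⟨by simp; omega, Or.inr hAM'⟩
            · rw [majStep_other _ _ _ hk hxb] at hs2 ⊢
              by_cases hk1 : k - 1 = 0
              · rw [hk1, majStep_zero] at hs2
                simp only [Prod.mk.injEq] at hs2
                obtain ⟨rfl, rfl⟩ := hs2
                refine ⟨by simp; omega, Or.inr fun m hm => ?_⟩
                rw [hAM' m hm, hcyb]
              · by_cases hyb : y = b
                · subst hyb
                  rw [majStep_self _ _ hk1] at hs2
                  simp only [Prod.mk.injEq] at hs2
                  obtain ⟨rfl, rfl⟩ := hs2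
                  exact ⟨by simp; omega, Or.inr hAM'⟩
                · rw [majStep_other _ _ _ hk1 hyb] at hs2
                  simp only [Prod.mk.injEq] at hs2
                  obtain ⟨rfl, rfl⟩ := hs2
                  exact ⟨by simp; omega, Or.inr hAM'⟩
        have hlen' : M'.length ≤ n := by
          simp only [List.length_cons, List.length_append, List.length_singleton] at hlen
          omega
        have ih' := ih M' hlen' hM'sorted b2 k2 key.2
        rw [pairSumD_cons_concat]
        simp only [bufFrom, wsum, List.map_cons, List.sum_cons] at ih' ⊢
        rw [hs2]
        rw [← hM'def]
        have hkey1 := key.1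
        simp only [Prod.fst] at *
        omega
end AuxU
/-- the worst-permutation value of Maj equals
2·Σ_{i=1}^{⌊n/2⌋} f_I(a'_i) + (n mod 2)·f_I(a'_{⌈n/2⌉}) where a' = D(I);
at least ⌈n/2⌉ steps contribute, and the minimum is achieved by the
interleaving permutation a'_1, a'_n, a'_2, a'_{n-1}, .... -/
theorem stmt7 (I : List ℕ) :
    worstP majP I =
      2 * ∑ i ∈ Finset.range (I.length / 2), freq I ((Dsort I).getD i 0) +
        ((I.length % 2 : ℕ) : ℝ) * freq I ((Dsort I).getD (I.length / 2) 0) ∧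
    (((I.length + 1) / 2 : ℕ) : ℝ) * (1 / (I.length : ℝ)) ≤ worstP majP I ∧
    majP (interleave (Dsort I)) = worstP majP I := by
  classical
  by_cases hI : I = []
  · subst hI
    have hmajnil : majP ([] : List ℕ) = 0 := by simp [majP, profit, majBuffers]
    have hset : {x | ∃ J, J.Perm ([] : List ℕ) ∧ x = majP J} = {(0 : ℝ)} := by
      ext x
      simp only [Set.mem_setOf_eq, Set.mem_singleton_iff]
      constructor
      · rintro ⟨J, hJ, rfl⟩
        rw [List.perm_nil.mp hJ, hmajnil]
      · rintro rfl
        exact ⟨[], List.Perm.refl _, hmajnil.symm⟩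
    have hw : worstP majP [] = 0 := by rw [worstP, hset, csInf_singleton]
    have hD : Dsort ([] : List ℕ) = [] := rfl
    refine ⟨?_, ?_, ?_⟩
    · simp [hw, hD, freq]
    · simp [hw]
    · rw [hw, hD, interleave, hmajnil]
  · have hn : 0 < I.length := List.length_pos_iff.mpr hI
    have hLperm : (Dsort I).Perm I := dsort_perm I
    have hLsort := dsort_sorted I
    have hLlen : (Dsort I).length = I.length := hLperm.length_eq
    set C : ℕ := ((((Dsort I).flatMap fun b => [b, b]).map I.count).take I.length).sum with hCdef
    have hmaj : ∀ J : List ℕ, J.Perm I →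
        majP J = (wsum I.count (majBuffers J) : ℝ) / (I.length : ℝ) := by
      intro J hJ
      rw [majP, profit_eq_wsum, hJ.length_eq]
      congr 2
      unfold wsum
      congr 1
      exact List.map_congr_left fun a _ => hJ.count_eq a
    have hlow : ∀ J : List ℕ, J.Perm I → C ≤ wsum I.count (majBuffers J) := by
      intro J hJ
      have hcount : ∀ a, (majBuffers J).count a ≤ 2 * (Dsort I).count a := by
        intro a
        have h1 := count_bufFrom (0, 0) J a
        rw [← majBuffers_eq] at h1
        have h2 : J.count a = (Dsort I).count a := (hJ.trans hLperm.symm).count_eq a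
        simp only [h2, ite_self] at h1
        omega
      have hlen2 : (majBuffers J).length = I.length := by
        rw [majBuffers_eq, length_bufFrom, hJ.length_eq]
      have h3 := wsum_lower I.count (Dsort I) (majBuffers J) hLsort hcount
      rw [hlen2] at h3
      exact h3
    have hpermi : (interleave (Dsort I)).Perm I := (interleave_perm _).trans hLperm
    have hup : wsum I.count (majBuffers (interleave (Dsort I))) ≤ C := by
      rw [majBuffers_eq]
      have h4 := lemU I.count (Dsort I).length (Dsort I) le_rfl hLsort 0 0 (Or.inl rfl)
      rw [pairSumD, hLlen] at h4
      exact h4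
    have heqi : wsum I.count (majBuffers (interleave (Dsort I))) = C :=
      le_antisymm hup (hlow _ hpermi)
    have hmajI : majP (interleave (Dsort I)) = (C : ℝ) / (I.length : ℝ) := by
      rw [hmaj _ hpermi, heqi]
    have hnne : ((I.length : ℝ)) ≠ 0 := by positivity
    have hlowR : ∀ x ∈ {x | ∃ J, J.Perm I ∧ x = majP J}, (C : ℝ) / (I.length : ℝ) ≤ x := by
      rintro x ⟨J, hJ, rfl⟩
      rw [hmaj J hJ]
      exact div_le_div_of_nonneg_right (by exact_mod_cast hlow J hJ) (by positivity)
    have hworst : worstP majP I = (C : ℝ) / (I.length : ℝ) := by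
      refine le_antisymm ?_ ?_
      · exact csInf_le ⟨_, hlowR⟩ ⟨interleave (Dsort I), hpermi, hmajI.symm⟩
      · exact le_csInf ⟨majP I, I, List.Perm.refl I, rfl⟩ hlowR
    have hsum := sum_take_doubled I.count (Dsort I) I.length (by omega)
    rw [← hCdef] at hsum
    beta_reduce at hsum
    refine ⟨?_, ?_, ?_⟩
    · rw [hworst, hsum]
      simp only [freq]
      push_cast
      rw [← Finset.sum_div]
      ring
    · rw [hworst]
      have hterm : ∀ i, i < I.length → 1 ≤ I.count ((Dsort I).getD i 0) := by
        intro i hi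
        have hi' : i < (Dsort I).length := by omega
        rw [List.getD_eq_getElem _ _ hi']
        have hmem : (Dsort I)[i] ∈ I := hLperm.mem_iff.mp (List.getElem_mem hi')
        exact List.count_pos_iff.mpr hmem
      have hCge : I.length ≤ C := by
        rw [hsum]
        have hs1 : I.length / 2 ≤ ∑ i ∈ Finset.range (I.length / 2), I.count ((Dsort I).getD i 0) := by
          have := Finset.card_nsmul_le_sum (Finset.range (I.length / 2))
            (fun i => I.count ((Dsort I).getD i 0)) 1
            (fun i hi => hterm i (by
              have := Finset.mem_range.mp hi
              omega))
          simpa using this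
        rcases Nat.even_or_odd I.length with he | ho
        · have : I.length % 2 = 0 := Nat.even_iff.mp he
          rw [this]
          omega
        · have h2 : I.length % 2 = 1 := Nat.odd_iff.mp ho
          have := hterm (I.length / 2) (by omega)
          rw [h2]
          omega
      rw [mul_one_div]
      exact div_le_div_of_nonneg_right (by exact_mod_cast le_trans (by omega) hCge) (by positivity)
    · rw [hworst, hmajI]
end

section
/- For every input sequence I of length n ≥ 1, Opt(I) ≤ (√n/(2 − 1/√n))·Nai(I); in particular the naive algorithm has competitive function √n/2. -/
open scoped BigOperators

/-- Opt(I) ≤ (√n/(2 - 1/√n))·Nai(I) for every I of length n ≥ 1;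
in particular Nai has competitive function √n/2. -/
theorem stmt9 (I : List ℕ) (h : 1 ≤ I.length) :
    optP I ≤ Real.sqrt I.length / (2 - 1 / Real.sqrt I.length) * naiP I := by
  classical
  have hI : I ≠ [] := by intro h0; simp [h0] at h
  set m := I.toFinset.sup (fun a => I.count a) with hm
  have hcount : ∀ a, I.count a ≤ m := by
    intro a
    by_cases ha : a ∈ I
    · exact Finset.le_sup (f := fun a => I.count a) (List.mem_toFinset.2 ha)
    · simp [List.count_eq_zero_of_not_mem ha]
  have htne : I.toFinset.Nonempty := by
    obtain ⟨a, ha⟩ := List.exists_mem_of_ne_nil I hI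
    exact ⟨a, List.mem_toFinset.2 ha⟩
  obtain ⟨a0, ha0, ha0m⟩ := Finset.exists_mem_eq_sup _ htne (fun a => I.count a)
  have ha0I : a0 ∈ I := List.mem_toFinset.1 ha0
  have hc0 : 0 < I.count a0 := List.count_pos_iff.2 ha0I
  have hmc : m = I.count a0 := hm.trans ha0m
  have hm1 : 1 ≤ m := by omega
  have hmn : m ≤ I.length := hmc ▸ List.count_le_length (a := a0) (l := I)
  have hsum : ∑ a ∈ I.toFinset, I.count a = I.length :=
    List.sum_toFinset_count_eq_length I
  have hsplit : I.count a0 + ∑ a ∈ I.toFinset.erase a0, I.count a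
      = ∑ a ∈ I.toFinset, I.count a :=
    Finset.add_sum_erase I.toFinset (fun a => I.count a) ha0
  have hsq2 : I.count a0 ^ 2 + ∑ a ∈ I.toFinset.erase a0, I.count a ^ 2
      = ∑ a ∈ I.toFinset, I.count a ^ 2 :=
    Finset.add_sum_erase I.toFinset (fun a => I.count a ^ 2) ha0
  have h1 : ∑ a ∈ I.toFinset.erase a0, I.count a ≤
      ∑ a ∈ I.toFinset.erase a0, I.count a ^ 2 :=
    Finset.sum_le_sum fun a _ => Nat.le_self_pow two_ne_zero _
  have hE : I.length - m = ∑ a ∈ I.toFinset.erase a0, I.count a := by omega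
  have hS2 : m ^ 2 + (I.length - m) ≤ ∑ a ∈ I.toFinset, I.count a ^ 2 := by
    calc m ^ 2 + (I.length - m)
        = I.count a0 ^ 2 + ∑ a ∈ I.toFinset.erase a0, I.count a := by rw [hE, hmc]
      _ ≤ I.count a0 ^ 2 + ∑ a ∈ I.toFinset.erase a0, I.count a ^ 2 :=
          Nat.add_le_add_left h1 _
      _ = ∑ a ∈ I.toFinset, I.count a ^ 2 := hsq2
  set N : ℝ := (I.length : ℝ) with hNdef
  set M : ℝ := (m : ℝ) with hMdef
  have hN1 : (1 : ℝ) ≤ N := by rw [hNdef]; exact_mod_cast h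
  have hN0 : (0 : ℝ) < N := lt_of_lt_of_le one_pos hN1
  have hM1 : (1 : ℝ) ≤ M := by rw [hMdef]; exact_mod_cast hm1
  set s : ℝ := Real.sqrt N with hsdef
  have hsq : s ^ 2 = N := Real.sq_sqrt hN0.le
  have hs0 : (0 : ℝ) < s := Real.sqrt_pos.2 hN0
  have hs1 : (1 : ℝ) ≤ s := by nlinarith [hsq, hs0]
  have h2pos : (0 : ℝ) < 2 - 1 / s := by
    have : 1 / s ≤ 1 := by rw [div_le_one hs0]; exact hs1
    linarith
  -- lower bound on naiP
  have hS2' : M ^ 2 + (N - M) ≤ ∑ a ∈ I.toFinset, ((I.count a : ℝ)) ^ 2 := by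
    have h4 : ((m ^ 2 + (I.length - m) : ℕ) : ℝ) ≤
        ((∑ a ∈ I.toFinset, I.count a ^ 2 : ℕ) : ℝ) := Nat.cast_le.2 hS2
    push_cast [Nat.cast_sub hmn] at h4
    rw [hMdef, hNdef]
    convert h4 using 2 <;> push_cast <;> ring
  have hNai_eq : naiP I = (∑ a ∈ I.toFinset, ((I.count a : ℝ)) ^ 2) / N := by
    unfold naiP profit
    rw [Finset.sum_list_map_count, Finset.sum_div]
    refine Finset.sum_congr rfl fun a _ => ?_
    unfold freq
    simp only [nsmul_eq_mul]
    rw [sq, hNdef]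
    ring
  have hNai : (M ^ 2 + (N - M)) / N ≤ naiP I := by
    rw [hNai_eq]
    gcongr
  -- upper bound on optP
  have hOpt : optP I ≤ M := by
    apply csSup_le
    · exact ⟨profit I I, I, ⟨rfl, fun i _ => Or.inl rfl⟩, rfl⟩
    · rintro x ⟨S, ⟨hlen, _⟩, rfl⟩
      have hterm : ∀ y ∈ S.map (freq I), y ≤ M / N := by
        intro y hy
        obtain ⟨a, _, rfl⟩ := List.mem_map.1 hy
        unfold freq
        rw [hMdef, hNdef]
        gcongr
        exact_mod_cast hcount a
      have hsum_le := List.sum_le_card_nsmul (S.map (freq I)) (M / N) hterm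
      rw [List.length_map, hlen, nsmul_eq_mul, ← hNdef] at hsum_le
      have hcancel : N * (M / N) = M := by field_simp
      rw [hcancel] at hsum_le
      exact hsum_le
  -- final algebra
  have hcoef : 0 ≤ s / (2 - 1 / s) := le_of_lt (div_pos hs0 h2pos)
  have key : M ≤ s / (2 - 1 / s) * ((M ^ 2 + (N - M)) / N) := by
    rw [div_mul_div_comm, le_div_iff₀ (by positivity)]
    rw [← hsq]
    have hrw : M * ((2 - 1 / s) * s ^ 2) = M * (2 * s - 1) * s := by
      field_simp
    rw [hrw]
    nlinarith [mul_nonneg hs0.le (sq_nonneg (M - s))]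
  calc optP I ≤ M := hOpt
    _ ≤ s / (2 - 1 / s) * ((M ^ 2 + (N - M)) / N) := key
    _ ≤ s / (2 - 1 / s) * naiP I := mul_le_mul_of_nonneg_left hNai hcoef
end

section
/- For every input sequence I of length n ≥ 4, Opt(I) ≤ (n/2)·Maj(I). -/
open scoped BigOperators

/- Auxiliary machinery for analyzing the Majority algorithm. -/

/-- Signed counter toward item `a`. -/
private def Pa (a : ℕ) (s : ℕ × ℕ) : ℤ := if s.1 = a then (s.2 : ℤ) else -(s.2 : ℤ)

/-- Counter of `a` if buffered, else 0. -/
private def Qa (a : ℕ) (s : ℕ × ℕ) : ℤ := if s.1 = a then (s.2 : ℤ) else 0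

/-- Buffers of the Majority run starting from state `s`. -/
private def bufs (s : ℕ × ℕ) (L : List ℕ) : List ℕ :=
  ((List.scanl majStep s L).tail).map Prod.fst

private lemma bufs_nil (s : ℕ × ℕ) : bufs s [] = [] := by simp [bufs]

private lemma bufs_cons (s : ℕ × ℕ) (x : ℕ) (L : List ℕ) :
    bufs s (x :: L) = (majStep s x).1 :: bufs (majStep s x) L := by
  cases L <;> simp [bufs]

private lemma len_bufs (s : ℕ × ℕ) (L : List ℕ) : (bufs s L).length = L.length := by
  simp [bufs, List.length_scanl]

private lemma stepP (a x : ℕ) (s : ℕ × ℕ) :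
    Pa a s + (if x = a then 1 else -1) ≤ Pa a (majStep s x) := by
  obtain ⟨b, c⟩ := s
  simp only [Pa, majStep]
  split_ifs <;> simp_all <;> omega

private lemma stepQ (a x : ℕ) (s : ℕ × ℕ) :
    Qa a (majStep s x) ≤ Qa a s + (if (majStep s x).1 = a then 1 else 0) := by
  obtain ⟨b, c⟩ := s
  simp only [Qa, majStep]
  split_ifs <;> simp_all <;> omega

private lemma foldlP (a : ℕ) : ∀ (L : List ℕ) (s : ℕ × ℕ),
    Pa a s + 2 * (L.count a : ℤ) - L.length ≤ Pa a (L.foldl majStep s)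
  | [], s => by simp
  | x :: L, s => by
    have h1 := stepP a x s
    have h2 := foldlP a L (majStep s x)
    simp only [List.foldl_cons, List.count_cons, List.length_cons, beq_iff_eq] at *
    split_ifs at * <;> push_cast at * <;> omega

private lemma countQ (a : ℕ) : ∀ (L : List ℕ) (s : ℕ × ℕ),
    Qa a (L.foldl majStep s) ≤ Qa a s + ((bufs s L).count a : ℤ)
  | [], s => by simp [bufs]
  | x :: L, s => by
    have h1 := stepQ a x s
    have h2 := countQ a L (majStep s x)
    rw [bufs_cons]
    simp only [List.foldl_cons, List.count_cons, beq_iff_eq] at *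
    split_ifs at * <;> push_cast at * <;> omega

private lemma PleQ (a : ℕ) (s : ℕ × ℕ) : Pa a s ≤ Qa a s := by
  obtain ⟨b, c⟩ := s
  simp only [Pa, Qa]
  split_ifs <;> omega

private lemma fst_majStep (s : ℕ × ℕ) (x : ℕ) :
    (majStep s x).1 = x ∨ (majStep s x).1 = s.1 := by
  simp only [majStep]; split_ifs <;> simp

private lemma mem_bufs : ∀ (L : List ℕ) (s : ℕ × ℕ) (b : ℕ),
    b ∈ bufs s L → b ∈ L ∨ b = s.1
  | [], s, b => by simp [bufs]
  | x :: L, s, b => by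
    rw [bufs_cons]
    intro hb
    rcases List.mem_cons.1 hb with h' | h'
    · rcases fst_majStep s x with h'' | h''
      · exact Or.inl (by rw [h', h'']; exact List.mem_cons_self)
      · exact Or.inr (h' ▸ h'')
    · rcases mem_bufs L (majStep s x) b h' with h'' | h''
      · exact Or.inl (List.mem_cons_of_mem _ h'')
      · rcases fst_majStep s x with h3 | h3
        · exact Or.inl (by rw [h'', h3]; exact List.mem_cons_self)
        · exact Or.inr (h'' ▸ h3)

private lemma sumBound (f : ℕ → ℕ) (a : ℕ) : ∀ B : List ℕ, (∀ b ∈ B, 1 ≤ f b) →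
    B.count a * f a + (B.length - B.count a) ≤ (B.map f).sum
  | [], _ => by simp
  | x :: B, h => by
    have hx : 1 ≤ f x := h x (List.mem_cons_self)
    have ih := sumBound f a B (fun b hb => h b (List.mem_cons_of_mem _ hb))
    have hc : B.count a ≤ B.length := List.count_le_length
    simp only [List.count_cons, List.length_cons, List.map_cons, List.sum_cons, beq_iff_eq]
    split_ifs with hxa
    · have hfx : f x = f a := by rw [hxa]
      rw [add_mul, one_mul, hfx]
      omega
    · rw [add_zero]
      omega

private lemma sum_freq (I : List ℕ) : ∀ B : List ℕ,
    (B.map (freq I)).sum = ((B.map I.count).sum : ℝ) / I.length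
  | [] => by simp
  | x :: B => by
    simp only [List.map_cons, List.sum_cons, sum_freq I B, freq]
    push_cast
    ring

/-- Opt(I) ≤ (n/2)·Maj(I) for every I of length n ≥ 4. -/
theorem stmt10 (I : List ℕ) (h : 4 ≤ I.length) :
    optP I ≤ (I.length : ℝ) / 2 * majP I := by
  set n := I.length with hn
  have hI : I ≠ [] := by
    intro h'
    rw [h'] at hn
    simp [hn] at h
  obtain ⟨a, ha⟩ : ∃ a, I.argmax I.count = some a := by
    cases h' : I.argmax I.count with
    | none => exact absurd (List.argmax_eq_none.1 h') hI
    | some a => exact ⟨a, rfl⟩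
  have haI : a ∈ I := List.argmax_mem ha
  set m := I.count a with hm
  have hm1 : 1 ≤ m := List.count_pos_iff.2 haI
  have hmax : ∀ x, I.count x ≤ m := by
    intro x
    by_cases hx : x ∈ I
    · exact List.le_of_mem_argmax hx ha
    · rw [List.count_eq_zero_of_not_mem hx]; omega
  have hmn : m ≤ n := by rw [hm, hn]; exact List.count_le_length
  obtain ⟨x, rest, hIx⟩ : ∃ x rest, I = x :: rest := by
    cases I with
    | nil => exact absurd rfl hI
    | cons x rest => exact ⟨x, rest, rfl⟩
  set B := majBuffers I with hB
  have hBbufs : B = bufs (0, 0) I := rfl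
  have hBlen : B.length = n := by rw [hBbufs, len_bufs, hn]
  have hBmem : ∀ b ∈ B, b ∈ I := by
    intro b hb
    rw [hBbufs] at hb
    conv at hb => rw [hIx]
    rw [bufs_cons] at hb
    have hms : majStep (0, 0) x = (x, 1) := by simp [majStep]
    rw [hms] at hb
    rcases List.mem_cons.1 hb with h' | h'
    · rw [hIx, h']; exact List.mem_cons_self
    · rcases mem_bufs _ _ _ h' with h'' | h''
      · rw [hIx]; exact List.mem_cons_of_mem _ h''
      · rw [hIx, h'']; exact List.mem_cons_self
  set N := B.count a with hNdef
  set S := (B.map I.count).sum with hS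
  have hSsum : N * m + (B.length - N) ≤ S :=
    sumBound I.count a B (fun b hb => List.count_pos_iff.2 (hBmem b hb))
  have hNlen : N ≤ B.length := List.count_le_length
  have hkey : 2 * m ≤ S := by
    by_cases hcase : 2 * m ≤ n
    · have hNm : N ≤ N * m := Nat.le_mul_of_pos_right N hm1
      omega
    · have h2m : n + 1 ≤ 2 * m := by omega
      have hP := foldlP a I (0, 0)
      have hQ := countQ a I (0, 0)
      have hPa0 : Pa a (0, 0) = 0 := by simp [Pa]
      have hQa0 : Qa a (0, 0) = 0 := by simp [Qa]
      rw [hPa0] at hP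
      rw [hQa0] at hQ
      rw [← hm, ← hn] at hP
      have hQfin := PleQ a (I.foldl majStep (0, 0))
      rw [← hBbufs, ← hNdef] at hQ
      have hNZ : 2 * (m : ℤ) - n ≤ N := by omega
      have hNge : 2 * m ≤ N + n := by omega
      have h2le : 2 ≤ m := by omega
      have h2 : 2 * N ≤ N * m := by
        calc 2 * N = N * 2 := by ring
        _ ≤ N * m := Nat.mul_le_mul_left N h2le
      omega
  have hnpos : 0 < n := by omega
  have hnR : (0 : ℝ) < n := by exact_mod_cast hnpos
  have hmajP : majP I = (S : ℝ) / n := by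
    rw [majP, profit, ← hB, sum_freq, ← hS, ← hn]
  have hopt : optP I ≤ (m : ℝ) := by
    apply Real.sSup_le
    · rintro y ⟨Sd, hSd, rfl⟩
      obtain ⟨hlen, -⟩ := hSd
      rw [profit]
      have hle : ∀ y ∈ Sd.map (freq I), y ≤ (m : ℝ) / n := by
        rintro y hy
        obtain ⟨b, hb, rfl⟩ := List.mem_map.1 hy
        rw [freq, ← hn]
        gcongr
        exact_mod_cast hmax b
      calc (Sd.map (freq I)).sum ≤ (Sd.map (freq I)).length • ((m : ℝ) / n) :=
            List.sum_le_card_nsmul _ _ hle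
        _ = n * ((m : ℝ) / n) := by
            rw [List.length_map, hlen, ← hn, nsmul_eq_mul]
        _ = m := by field_simp
    · positivity
  calc optP I ≤ (m : ℝ) := hopt
    _ ≤ (S : ℝ) / 2 := by
        have h2 : ((2 * m : ℕ) : ℝ) ≤ (S : ℝ) := Nat.cast_le.2 hkey
        push_cast at h2
        linarith
    _ = (n : ℝ) / 2 * ((S : ℝ) / n) := by field_simp
    _ = (n : ℝ) / 2 * majP I := by rw [hmajP]
end

section
/- For every input sequence I of length n, Opt(I) ≤ (n/2)·Eag(I). Moreover on E_n, Opt(E_n) = (n/2)·Eag(E_n) − 4 + 8/n, so Eag has competitive function exactly n/2. -/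
open scoped BigOperators

section Aux

lemma aux_freq_def (I : List ℕ) (c : ℕ) : freq I c = (I.count c : ℝ) / (I.length : ℝ) := rfl

lemma aux_profit_def (I S : List ℕ) : profit I S = (S.map (freq I)).sum := rfl

/-- Pointwise upper bound on a mapped sum. -/
lemma aux_sum_map_le (S : List ℕ) (f : ℕ → ℝ) (c : ℝ) (h : ∀ s ∈ S, f s ≤ c) :
    (S.map f).sum ≤ S.length * c := by
  induction S with
  | nil => simp
  | cons x xs ih =>
    simp only [List.map_cons, List.sum_cons, List.length_cons]
    have h1 := ih (fun s hs => h s (List.mem_cons_of_mem _ hs))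
    have hx := h x List.mem_cons_self
    push_cast
    nlinarith

/-- Pointwise lower bound on a mapped sum. -/
lemma aux_le_sum_map (S : List ℕ) (f : ℕ → ℝ) (c : ℝ) (h : ∀ s ∈ S, c ≤ f s) :
    S.length * c ≤ (S.map f).sum := by
  induction S with
  | nil => simp
  | cons x xs ih =>
    simp only [List.map_cons, List.sum_cons, List.length_cons]
    have h1 := ih (fun s hs => h s (List.mem_cons_of_mem _ hs))
    have hx := h x List.mem_cons_self
    push_cast
    nlinarith

lemma aux_sum_map_const (l : List ℕ) (c : ℝ) : (l.map (fun _ => c)).sum = l.length * c := by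
  induction l with
  | nil => simp
  | cons x xs ih => simp [ih]; push_cast; ring

lemma aux_chain_count (a : ℕ) : ∀ L : List ℕ, L.Chain' (· ≠ ·) → 2 * L.count a ≤ L.length + 1
  | [] => by simp
  | [x] => by
    intro _
    by_cases h : x = a <;> simp [List.count_cons, h]
  | x :: y :: l => by
    intro hc
    have hxy : x ≠ y := (List.isChain_cons_cons.mp hc).1
    have hyl : (y :: l).Chain' (· ≠ ·) := (List.isChain_cons_cons.mp hc).2
    have hl : l.Chain' (· ≠ ·) := hyl.tail
    have ih := aux_chain_count a l hl
    have hone : (x :: y :: l).count a ≤ 1 + l.count a := by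
      rw [List.count_cons, List.count_cons]
      simp only [beq_iff_eq]
      split_ifs <;> omega
    simp only [List.length_cons]
    omega

lemma aux_sum_ite (l : List ℕ) (a : ℕ) (c : ℝ) :
    (l.map (fun x => if x = a then c else 0)).sum = l.count a * c := by
  induction l with
  | nil => simp
  | cons x xs ih =>
    rcases eq_or_ne x a with rfl | h
    · simp [List.count_cons, ih]; ring
    · simp [List.count_cons, h, ih]

lemma aux_sum_map_add (l : List ℕ) (f g : ℕ → ℝ) :
    (l.map (fun x => f x + g x)).sum = (l.map f).sum + (l.map g).sum := by
  induction l with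
  | nil => simp
  | cons x xs ih => simp [ih]; ring

/-- Structure of `eagRun`. -/
lemma aux_eagRun_spec : ∀ I : List ℕ,
    (I.Chain' (· ≠ ·) ∧ eagRun I = I) ∨
    ∃ l₁ x l₂, I = l₁ ++ x :: x :: l₂ ∧ (l₁ ++ [x]).Chain' (· ≠ ·) ∧
      eagRun I = l₁ ++ List.replicate (l₂.length + 2) x
  | [] => Or.inl ⟨by simp [List.Chain'], rfl⟩
  | [x] => Or.inl ⟨by simp [List.Chain'], rfl⟩
  | x :: y :: rest => by
    by_cases h : x = y
    · subst h
      right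
      refine ⟨[], x, rest, by simp, by simp [List.Chain'], ?_⟩
      show eagRun (x :: x :: rest) = List.replicate (rest.length + 2) x
      rw [eagRun, if_pos rfl]
      simp [List.replicate_succ]
    · have hrec := aux_eagRun_spec (y :: rest)
      have herun : eagRun (x :: y :: rest) = x :: eagRun (y :: rest) := by
        rw [eagRun, if_neg h]
      rcases hrec with ⟨hch, heq⟩ | ⟨l₁, z, l₂, heq, hch, he⟩
      · left
        constructor
        · exact List.isChain_cons_cons.mpr ⟨h, hch⟩
        · rw [herun, heq]
      · right
        refine ⟨x :: l₁, z, l₂, by rw [List.cons_append, ← heq], ?_, ?_⟩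
        · rw [List.cons_append]
          apply List.isChain_cons.mpr
          refine ⟨?_, hch⟩
          intro w hw
          cases l₁ with
          | nil =>
            simp at hw heq
            omega
          | cons u l₁' =>
            simp at hw heq
            omega
        · rw [herun, he, List.cons_append]

lemma aux_optP_le (I : List ℕ) (c : ℝ) (hc : 0 ≤ c) (hfreq : ∀ a : ℕ, freq I a ≤ c) :
    optP I ≤ I.length * c := by
  apply Real.sSup_le
  · rintro x ⟨S, hS, rfl⟩
    have hb : profit I S ≤ S.length * c :=
      aux_sum_map_le S _ c (fun s _ => hfreq s)
    rwa [hS.1] at hb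
  · positivity

lemma aux_part1 (I : List ℕ) (hn : 2 ≤ I.length) :
    optP I ≤ (I.length : ℝ) / 2 * eagP I := by
  have hN0 : (0 : ℝ) < (I.length : ℝ) := by
    have h0 : 0 < I.length := by omega
    exact_mod_cast h0
  have hN2 : (2 : ℝ) ≤ (I.length : ℝ) := by exact_mod_cast hn
  have hmem_freq : ∀ y ∈ I, 1 / (I.length : ℝ) ≤ freq I y := by
    intro y hy
    have h1 : 0 < I.count y := List.count_pos_iff.mpr hy
    rw [aux_freq_def]
    gcongr
    exact_mod_cast h1
  rcases aux_eagRun_spec I with ⟨hch, heq⟩ | ⟨l₁, x, l₂, heq, hch, he⟩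
  · -- no adjacent repeat: eagRun I = I
    have heag : eagP I = (I.map (freq I)).sum := by
      unfold eagP
      rw [heq, aux_profit_def]
    by_cases hall : ∀ c : ℕ, I.count c ≤ 1
    · -- all counts ≤ 1
      have hopt : optP I ≤ (I.length : ℝ) * (1 / (I.length : ℝ)) := by
        apply aux_optP_le I (1 / (I.length : ℝ)) (by positivity)
        intro c
        rw [aux_freq_def]
        gcongr
        exact_mod_cast hall c
      have hopt1 : optP I ≤ 1 := by
        rwa [mul_one_div, div_self (ne_of_gt hN0)] at hopt
      have heag1 : (1 : ℝ) ≤ eagP I := by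
        have hs := aux_le_sum_map I (freq I) (1 / (I.length : ℝ)) hmem_freq
        rw [heag]
        calc (1 : ℝ) = (I.length : ℝ) * (1 / (I.length : ℝ)) := by field_simp
        _ ≤ (I.map (freq I)).sum := hs
      calc optP I ≤ 1 := hopt1
      _ ≤ (I.length : ℝ) / 2 * eagP I := by nlinarith
    · -- some count ≥ 2
      push_neg at hall
      obtain ⟨a, ha⟩ := hall
      have ha2 : (2 : ℝ) ≤ (I.count a : ℝ) := by exact_mod_cast ha
      have hopt : optP I ≤ (I.length : ℝ) *
          (((I.length : ℝ) + 1) / (2 * (I.length : ℝ))) := by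
        apply aux_optP_le I _ (by positivity)
        intro c
        have h2c : 2 * I.count c ≤ I.length + 1 := aux_chain_count c I hch
        have h2c' : 2 * (I.count c : ℝ) ≤ (I.length : ℝ) + 1 := by exact_mod_cast h2c
        rw [aux_freq_def, div_le_div_iff₀ hN0 (by positivity)]
        nlinarith
      have heag1 : 1 + 2 / (I.length : ℝ) ≤ eagP I := by
        rw [heag]
        have hpt : (I.map (fun y => 1 / (I.length : ℝ) +
            (if y = a then 1 / (I.length : ℝ) else 0))).sum ≤ (I.map (freq I)).sum := by
          apply List.sum_le_sum
          intro y hy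
          rcases eq_or_ne y a with rfl | hya
          · rw [if_pos rfl, ← add_div, aux_freq_def]
            gcongr
            exact_mod_cast ha
          · rw [if_neg hya, add_zero]
            exact hmem_freq y hy
        have hsplit : (I.map (fun y => 1 / (I.length : ℝ) +
            (if y = a then 1 / (I.length : ℝ) else 0))).sum
            = (I.length : ℝ) * (1 / (I.length : ℝ)) + (I.count a : ℝ) * (1 / (I.length : ℝ)) := by
          rw [aux_sum_map_add I (fun _ => 1 / (I.length : ℝ))
            (fun y => if y = a then 1 / (I.length : ℝ) else 0), aux_sum_ite, aux_sum_map_const]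
        rw [hsplit] at hpt
        refine le_trans ?_ hpt
        rw [mul_one_div, div_self (ne_of_gt hN0), mul_one_div]
        have hca : 2 / (I.length : ℝ) ≤ (I.count a : ℝ) / (I.length : ℝ) := by
          gcongr
        linarith
      have key : ((I.length : ℝ) + 1) / 2 ≤ (I.length : ℝ) / 2 * (1 + 2 / (I.length : ℝ)) := by
        have hkey : (I.length : ℝ) / 2 * (1 + 2 / (I.length : ℝ)) = (I.length : ℝ) / 2 + 1 := by
          field_simp
        rw [hkey]
        linarith
      calc optP I ≤ (I.length : ℝ) * (((I.length : ℝ) + 1) / (2 * (I.length : ℝ))) := hopt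
      _ = ((I.length : ℝ) + 1) / 2 := by field_simp <;> ring
      _ ≤ (I.length : ℝ) / 2 * (1 + 2 / (I.length : ℝ)) := key
      _ ≤ (I.length : ℝ) / 2 * eagP I := by nlinarith
  · -- there is an adjacent repeat
    have hlen : I.length = l₁.length + l₂.length + 2 := by
      rw [heq]; simp; omega
    have hcx : 2 ≤ I.count x := by
      rw [heq, List.count_append]
      have h2 : (x :: x :: l₂).count x = l₂.count x + 2 := by
        simp [List.count_cons]
      omega
    have hcx' : (2 : ℝ) ≤ (I.count x : ℝ) := by exact_mod_cast hcx
    have hcnt : ∀ c : ℕ, 2 * I.count c + l₁.length ≤ 2 * I.length := by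
      intro c
      have hcc : 2 * (l₁ ++ [x]).count c ≤ (l₁ ++ [x]).length + 1 :=
        aux_chain_count c _ hch
      have hlen1 : (l₁ ++ [x]).length = l₁.length + 1 := by simp
      have hIc : I.count c ≤ (l₁ ++ [x]).count c + 1 + l₂.length := by
        rw [heq]
        simp only [List.count_append, List.count_cons]
        have hl2 := List.count_le_length (a := c) (l := l₂)
        split_ifs <;> simp_all <;> omega
      omega
    have hopt : optP I ≤ (I.length : ℝ) *
        ((2 * (I.length : ℝ) - (l₁.length : ℝ)) / (2 * (I.length : ℝ))) := by
      have hple : (l₁.length : ℝ) ≤ 2 * (I.length : ℝ) := by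
        have h' : l₁.length ≤ 2 * I.length := by
          have := hcnt 0
          omega
        exact_mod_cast h'
      apply aux_optP_le I _ (div_nonneg (by linarith) (by positivity))
      intro c
      have h2 : 2 * (I.count c : ℝ) + (l₁.length : ℝ) ≤ 2 * (I.length : ℝ) := by
        exact_mod_cast hcnt c
      rw [aux_freq_def, div_le_div_iff₀ hN0 (by positivity)]
      nlinarith
    have heag : (2 * (I.length : ℝ) - (l₁.length : ℝ)) / (I.length : ℝ) ≤ eagP I := by
      unfold eagP
      rw [he, aux_profit_def, List.map_append, List.sum_append]
      have h1 : (l₁.length : ℝ) * (1 / (I.length : ℝ)) ≤ (l₁.map (freq I)).sum := by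
        apply aux_le_sum_map
        intro s hs
        apply hmem_freq
        rw [heq]
        exact List.mem_append_left _ hs
      have hfx : 2 / (I.length : ℝ) ≤ freq I x := by
        rw [aux_freq_def]
        gcongr
        try exact_mod_cast hcx
      have h2 : ((l₂.length : ℝ) + 2) * (2 / (I.length : ℝ))
          ≤ ((List.replicate (l₂.length + 2) x).map (freq I)).sum := by
        rw [List.map_replicate, List.sum_replicate, nsmul_eq_mul]
        push_cast
        have hm0 : (0 : ℝ) ≤ (l₂.length : ℝ) := by positivity
        nlinarith
      have hsum : (l₁.length : ℝ) * (1 / (I.length : ℝ)) +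
          ((l₂.length : ℝ) + 2) * (2 / (I.length : ℝ))
          = (2 * (I.length : ℝ) - (l₁.length : ℝ)) / (I.length : ℝ) := by
        have hNe : (I.length : ℝ) = (l₁.length : ℝ) + (l₂.length : ℝ) + 2 := by
          rw [hlen]; push_cast; ring
        rw [hNe]
        field_simp <;> ring
      linarith
    calc optP I ≤ (I.length : ℝ) *
        ((2 * (I.length : ℝ) - (l₁.length : ℝ)) / (2 * (I.length : ℝ))) := hopt
    _ = (I.length : ℝ) / 2 *
        ((2 * (I.length : ℝ) - (l₁.length : ℝ)) / (I.length : ℝ)) := by field_simp <;> ring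
    _ ≤ (I.length : ℝ) / 2 * eagP I := by
        apply mul_le_mul_of_nonneg_left heag (by positivity)

lemma aux_part2 (n a b : ℕ) (hab : a ≠ b) (hn : 4 ≤ n) :
    optP (Eseq n a b) = (n : ℝ) / 2 * eagP (Eseq n a b) - 4 + 8 / n := by
  have hI : Eseq n a b = a :: a :: List.replicate (n - 2) b := rfl
  have hlen : (Eseq n a b).length = n := by
    rw [hI]; simp; omega
  have hN0 : (0 : ℝ) < (n : ℝ) := by
    have : 0 < n := by omega
    exact_mod_cast this
  have hN4 : (4 : ℝ) ≤ (n : ℝ) := by exact_mod_cast hn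
  have hc2 : ((n - 2 : ℕ) : ℝ) = (n : ℝ) - 2 := by
    rw [Nat.cast_sub (by omega : 2 ≤ n)]
    norm_num
  have hca : (Eseq n a b).count a = 2 := by
    rw [hI]
    simp [List.count_cons, List.count_replicate, hab, Ne.symm hab]
  have hcb : (Eseq n a b).count b = n - 2 := by
    rw [hI]
    simp [List.count_cons, List.count_replicate, hab, Ne.symm hab]
  have hcany : ∀ c : ℕ, (Eseq n a b).count c ≤ n - 2 := by
    intro c
    rw [hI]
    simp only [List.count_cons, List.count_replicate, beq_iff_eq]
    have := List.count_le_length (a := c) (l := List.replicate (n - 2) b)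
    split_ifs <;> simp_all <;> omega
  have hfa : freq (Eseq n a b) a = 2 / (n : ℝ) := by
    rw [aux_freq_def, hca, hlen]
    norm_num
  have hfb : freq (Eseq n a b) b = ((n : ℝ) - 2) / (n : ℝ) := by
    rw [aux_freq_def, hcb, hlen, hc2]
  have hfany : ∀ c : ℕ, freq (Eseq n a b) c ≤ ((n : ℝ) - 2) / (n : ℝ) := by
    intro c
    rw [aux_freq_def, hlen, ← hc2]
    gcongr
    all_goals first
      | exact_mod_cast hcany c
      | exact_mod_cast (by omega : 0 < n)
  have htarget : (0 : ℝ) ≤ (n : ℝ) - 4 + 8 / (n : ℝ) := by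
    have h8 : (0 : ℝ) < 8 / (n : ℝ) := by positivity
    linarith
  have harith : 2 / (n:ℝ) + (2 / (n:ℝ) + ((n:ℝ) - 2) * (((n:ℝ) - 2) / (n:ℝ)))
      = (n : ℝ) - 4 + 8 / (n:ℝ) := by
    field_simp
    ring
  have hprofI : profit (Eseq n a b) (Eseq n a b) = (n : ℝ) - 4 + 8 / (n : ℝ) := by
    rw [aux_profit_def]
    show ((a :: a :: List.replicate (n - 2) b).map (freq (Eseq n a b))).sum = _
    simp only [List.map_cons, List.sum_cons, List.map_replicate, List.sum_replicate,
      List.length_replicate, nsmul_eq_mul, hfa, hfb, hc2]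
    exact harith
  have hub : ∀ y ∈ {x | ∃ S, ValidSched (Eseq n a b) S ∧ x = profit (Eseq n a b) S},
      y ≤ (n : ℝ) - 4 + 8 / (n : ℝ) := by
    rintro y ⟨S, ⟨hlenS, hstep⟩, rfl⟩
    rw [hlen] at hlenS
    match S, hlenS, hstep with
    | [], hlenS, hstep => simp at hlenS; omega
    | [s0], hlenS, hstep => simp at hlenS; omega
    | s0 :: s1 :: S', hlenS, hstep =>
      have hS'len : S'.length = n - 2 := by simp at hlenS; omega
      have hs0 : s0 = a := by
        have h0 := hstep 0 (by simp)
        rcases h0 with h0 | h0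
        · simpa [Eseq] using h0
        · omega
      have hs1 : s1 = a := by
        have h1 := hstep 1 (by simp)
        rcases h1 with h1 | h1
        · simpa [Eseq] using h1
        · have := h1.2
          simpa [hs0] using this
      rw [aux_profit_def]
      simp only [List.map_cons, List.sum_cons, hs0, hs1, hfa]
      have hsum : (S'.map (freq (Eseq n a b))).sum ≤ S'.length * (((n:ℝ) - 2) / (n:ℝ)) :=
        aux_sum_map_le S' _ _ (fun s _ => hfany s)
      rw [hS'len] at hsum
      rw [hc2] at hsum
      linarith [harith, hsum]
  have hoptub : optP (Eseq n a b) ≤ (n : ℝ) - 4 + 8 / (n : ℝ) := Real.sSup_le hub htarget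
  have hoptlb : (n : ℝ) - 4 + 8 / (n : ℝ) ≤ optP (Eseq n a b) := by
    apply le_csSup ⟨(n : ℝ) - 4 + 8 / (n : ℝ), hub⟩
    exact ⟨Eseq n a b, ⟨rfl, fun i _ => Or.inl rfl⟩, hprofI.symm⟩
  have heag : eagP (Eseq n a b) = 2 := by
    have hrun : eagRun (Eseq n a b) = List.replicate n a := by
      rw [hI, eagRun, if_pos rfl, List.length_replicate]
      have hsucc : n = (n - 2 + 1) + 1 := by omega
      rw [hsucc]
      simp [List.replicate_succ]
    unfold eagP
    rw [hrun, aux_profit_def, List.map_replicate, List.sum_replicate, nsmul_eq_mul, hfa]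
    field_simp
  rw [heag]
  have harith2 : (n : ℝ) / 2 * 2 - 4 + 8 / (n:ℝ) = (n : ℝ) - 4 + 8 / (n:ℝ) := by ring
  rw [harith2]
  linarith

end Aux

/-- Opt(I) ≤ (n/2)·Eag(I) for every I, and on E_n,
Opt(E_n) = (n/2)·Eag(E_n) − 4 + 8/n; hence Eag has competitive function n/2. -/
theorem stmt11 :
    (∀ I : List ℕ, 2 ≤ I.length → optP I ≤ (I.length : ℝ) / 2 * eagP I) ∧
    (∀ n a b : ℕ, a ≠ b → 4 ≤ n →
      optP (Eseq n a b) = (n : ℝ) / 2 * eagP (Eseq n a b) - 4 + 8 / n) :=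
  ⟨aux_part1, aux_part2⟩
end

section
/- The relative interval of Nai versus Eag is [−1/4, 1]: limsup_n max_{|I|=n}(Nai(I)−Eag(I))/n = 1 and liminf_n min_{|I|=n}(Nai(I)−Eag(I))/n = −1/4. -/
open scoped BigOperators

section AuxProofs

open List Filter

lemma freq_nonneg (I : List ℕ) (a : ℕ) : 0 ≤ freq I a := by
  unfold freq; positivity

lemma freq_le_one (I : List ℕ) (a : ℕ) : freq I a ≤ 1 := by
  unfold freq
  rcases Nat.eq_zero_or_pos I.length with h | h
  · simp [h]
  · rw [div_le_one (by exact_mod_cast h)]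
    exact_mod_cast I.count_le_length (a := a)

lemma profit_nil (I : List ℕ) : profit I [] = 0 := by simp [profit]

lemma profit_cons (I : List ℕ) (x : ℕ) (S : List ℕ) :
    profit I (x :: S) = freq I x + profit I S := by simp [profit]

lemma profit_append (I S T : List ℕ) :
    profit I (S ++ T) = profit I S + profit I T := by simp [profit]

lemma profit_replicate (I : List ℕ) (k : ℕ) (x : ℕ) :
    profit I (List.replicate k x) = k * freq I x := by
  simp [profit, List.map_replicate, List.sum_replicate, nsmul_eq_mul]

lemma profit_nonneg (I S : List ℕ) : 0 ≤ profit I S := by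
  induction S with
  | nil => simp [profit_nil]
  | cons x S ih =>
      rw [profit_cons]
      have := freq_nonneg I x
      linarith

lemma profit_le_length (I S : List ℕ) : profit I S ≤ S.length := by
  induction S with
  | nil => simp [profit_nil]
  | cons x S ih =>
      rw [profit_cons]
      have := freq_le_one I x
      push_cast [List.length_cons]
      linarith

lemma profit_eq_sum_div (I : List ℕ) (S : List ℕ) :
    profit I S = (S.map fun t => (I.count t : ℝ)).sum / I.length := by
  induction S with
  | nil => simp [profit_nil]
  | cons x S ih =>
      rw [profit_cons, ih, freq, List.map_cons, List.sum_cons, _root_.add_div]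

lemma eagRun_cases : ∀ I : List ℕ, eagRun I = I ∨
    ∃ P a T, I = P ++ a :: a :: T ∧
      eagRun I = P ++ a :: List.replicate (T.length + 1) a
  | [] => Or.inl rfl
  | [x] => Or.inl rfl
  | x :: y :: rest => by
      by_cases h : x = y
      · subst h
        exact Or.inr ⟨[], x, rest, rfl, by simp [eagRun]⟩
      · rcases eagRun_cases (y :: rest) with h1 | ⟨P, a, T, h1, h2⟩
        · left; rw [eagRun, if_neg h, h1]
        · right
          exact ⟨x :: P, a, T, by simp [h1], by rw [eagRun, if_neg h, h2]; simp⟩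

lemma sum_count_ge (I : List ℕ) (a : ℕ) : ∀ T : List ℕ, (∀ t ∈ T, t ∈ I) →
    (T.count a : ℝ) * I.count a + ((T.length : ℝ) - T.count a)
      ≤ (T.map fun t => (I.count t : ℝ)).sum
  | [], _ => by simp
  | t :: T, h => by
      have hT := sum_count_ge I a T (fun s hs => h s (List.mem_cons_of_mem _ hs))
      have ht : (1 : ℝ) ≤ I.count t := by
        have := List.count_pos_iff.mpr (h t List.mem_cons_self)
        exact_mod_cast this
      by_cases hta : a = t
      · subst hta
        simp only [List.map_cons, List.sum_cons, List.count_cons_self, List.length_cons]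
        push_cast
        linarith
      · simp only [List.map_cons, List.sum_cons, List.length_cons,
          List.count_cons_of_ne (Ne.symm hta)]
        push_cast
        linarith

lemma arith_key (p pa m r s : ℝ) (hpa : pa ≤ p) (hr : r ≤ m) (h0pa : 0 ≤ pa)
    (h0r : 0 ≤ r) (h0p : 0 ≤ p) (h0m : 0 ≤ m)
    (hs : r * (pa + 2 + r) + (m - r) ≤ s) :
    -((p + 2 + m) / 4) ≤ s / (p + 2 + m) - m * ((pa + 2 + r) / (p + 2 + m)) := by
  have hN : (0 : ℝ) < p + 2 + m := by linarith
  have h2 : s / (p + 2 + m) - m * ((pa + 2 + r) / (p + 2 + m))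
      = (s - m * (pa + 2 + r)) / (p + 2 + m) := by
    field_simp
  rw [h2, le_div_iff₀ hN]
  nlinarith [sq_nonneg (p + 2 + m - 2 * (pa + 2 + r) + 1),
    mul_nonneg (sub_nonneg.2 hpa) (by linarith : (0 : ℝ) ≤ pa + 1 + r)]

/-- The key structural lower bound: Nai loses at most n/4 against Eag. -/
lemma diff_ge_neg_quarter (I : List ℕ) :
    -((I.length : ℝ) / 4) ≤ naiP I - eagP I := by
  rcases eagRun_cases I with h | ⟨P, a, T, hI, hE⟩
  · rw [naiP, eagP, h, sub_self]
    have : (0 : ℝ) ≤ (I.length : ℝ) / 4 := by positivity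
    linarith
  · have hlen : I.length = P.length + 2 + T.length := by
      rw [hI]; simp [List.length_append]; omega
    have h1 : naiP I - eagP I = profit I T - T.length * freq I a := by
      rw [naiP, eagP, hE, congrArg (profit I) hI, profit_append, profit_append,
        profit_cons, profit_cons, profit_cons, profit_replicate]
      push_cast
      ring
    have hmem : ∀ t ∈ T, t ∈ I := by
      intro t ht; rw [hI]; simp [ht]
    have hsum := sum_count_ge I a T hmem
    have hca : I.count a = P.count a + 2 + T.count a := by
      rw [hI]; simp [List.count_append, List.count_cons]; omega
    have hpa : P.count a ≤ P.length := P.count_le_length (a := a)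
    have hrm : T.count a ≤ T.length := T.count_le_length (a := a)
    rw [h1, profit_eq_sum_div, freq, hlen, hca]
    have key := arith_key (P.length : ℝ) (P.count a : ℝ) (T.length : ℝ)
      (T.count a : ℝ) ((T.map fun t => (I.count t : ℝ)).sum)
      (by exact_mod_cast hpa) (by exact_mod_cast hrm)
      (by positivity) (by positivity) (by positivity) (by positivity)
      (by rw [hca] at hsum; push_cast at hsum ⊢; linarith)
    push_cast
    convert key using 2 <;> ring

/-- Value on the E-sequence 1,1,0,...,0. -/
lemma diff_Eseq (n : ℕ) (hn : 2 ≤ n) :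
    naiP (Eseq n 1 0) - eagP (Eseq n 1 0) = (((n : ℝ) - 2) ^ 2 + 4) / n - 2 := by
  have hc1 : (Eseq n 1 0).count 1 = 2 := by
    simp [Eseq, List.count_cons, List.count_replicate]
  have hc0 : (Eseq n 1 0).count 0 = n - 2 := by
    simp [Eseq, List.count_cons, List.count_replicate]
  have hl : (Eseq n 1 0).length = n := by simp [Eseq]; omega
  have hE : eagRun (Eseq n 1 0) = 1 :: List.replicate (n - 2 + 1) 1 := by
    simp [Eseq, eagRun]
  have hn0 : (0 : ℝ) < n := by
    have : 0 < n := by omega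
    exact_mod_cast this
  rw [naiP, eagP, hE]
  rw [show profit (Eseq n 1 0) (Eseq n 1 0)
      = profit (Eseq n 1 0) (1 :: 1 :: List.replicate (n - 2) 0) from rfl]
  rw [profit_cons, profit_cons, profit_replicate, profit_cons, profit_replicate,
    freq, freq, hc1, hc0, hl]
  have h2 : ((n - 2 : ℕ) : ℝ) = (n : ℝ) - 2 := by
    have := Nat.cast_sub hn (R := ℝ); simpa using this
  rw [h2]
  push_cast [h2]
  field_simp
  ring

/-- Value on the I-sequence: c = ⌈n/2⌉ zeros then n/2 distinct items. -/
lemma diff_Iseq (n : ℕ) (hn : 3 ≤ n) :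
    naiP (Iseq n) - eagP (Iseq n)
      = -(((n / 2 : ℕ) : ℝ) * (((n + 1) / 2 : ℕ) - 1)) / n := by
  set c := (n + 1) / 2 with hc
  set k := n / 2 with hk
  have hck : c + k = n := by omega
  have hc2 : 2 ≤ c := by omega
  obtain ⟨c', hc'⟩ : ∃ c', c = c' + 2 := ⟨c - 2, by omega⟩
  have hIs : Iseq n = 0 :: 0 :: (List.replicate c' 0 ++ (List.range k).map (· + 1)) := by
    rw [show Iseq n = List.replicate c 0 ++ (List.range k).map (· + 1) from rfl, hc']
    simp [List.replicate_succ]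
  have hlen : (Iseq n).length = n := by
    rw [hIs]; simp; omega
  have hcnt0 : (Iseq n).count 0 = c := by
    rw [hIs]
    simp only [List.count_cons_self, List.count_append, List.count_replicate]
    have : ((List.range k).map (· + 1)).count 0 = 0 := by
      rw [List.count_eq_zero]
      simp
    simp [this]; omega
  have hcnti : ∀ i ∈ List.range k, (Iseq n).count (i + 1) = 1 := by
    intro i hi
    rw [hIs]
    simp only [List.count_cons, List.count_append, List.count_replicate]
    have h1 : ((List.range k).map (· + 1)).count (i + 1)
        = (List.range k).count i := List.count_map_of_injective _ _
          (fun a b h => by omega) i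
    have h2 : (List.range k).count i = 1 := by
      rw [List.count_eq_one_of_mem (List.nodup_range (n := k)) hi]
    simp [h1, h2]
  have hE : eagRun (Iseq n) = 0 :: List.replicate
      ((List.replicate c' 0 ++ (List.range k).map (· + 1)).length + 1) 0 := by
    rw [hIs]; rw [eagRun, if_pos rfl]
  have hlr : (List.replicate c' 0 ++ (List.range k).map (· + 1)).length + 1 = n - 1 := by
    simp; omega
  have hn0 : (0 : ℝ) < n := by
    have : 0 < n := by omega
    exact_mod_cast this
  have heagP : eagP (Iseq n) = c := by
    rw [eagP, hE, hlr, profit_cons, profit_replicate, freq, hcnt0, hlen]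
    have hn1 : ((n - 1 : ℕ) : ℝ) = (n : ℝ) - 1 := by
      have := Nat.cast_sub (by omega : 1 ≤ n) (R := ℝ); simpa using this
    rw [hn1]
    field_simp
    ring
  have hsum : ((List.range k).map fun i => freq (Iseq n) (i + 1)).sum
      = k * (1 / n) := by
    have : ∀ x ∈ (List.range k).map fun i => freq (Iseq n) (i + 1),
        x = 1 / (n : ℝ) := by
      intro x hx
      obtain ⟨i, hi, rfl⟩ := List.mem_map.1 hx
      rw [freq, hcnti i hi, hlen]
      push_cast; ring
    rw [List.sum_eq_card_nsmul _ _ this]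
    simp [nsmul_eq_mul]
  have hnaiP : naiP (Iseq n) = c * ((c : ℝ) / n) + k * (1 / n) := by
    rw [naiP, show profit (Iseq n) (Iseq n)
      = profit (Iseq n) (List.replicate c 0 ++ (List.range k).map (· + 1)) from rfl]
    rw [profit_append, profit_replicate, freq, hcnt0, hlen]
    congr 1
    rw [← hsum, profit]
    rw [List.map_map]
    rfl
  rw [hnaiP, heagP]
  have hckR : (c : ℝ) + k = n := by exact_mod_cast hck
  push_cast
  field_simp
  nlinarith [hckR]

end AuxProofs


section FinalAux

open List Filter

lemma diff_le_length (I : List ℕ) : naiP I - eagP I ≤ I.length := by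
  have h1 := profit_le_length I I
  have h2 := profit_nonneg I (eagRun I)
  simp only [naiP, eagP]
  linarith

lemma Eseq_length (n : ℕ) (hn : 2 ≤ n) : (Eseq n 1 0).length = n := by
  simp [Eseq]; omega

lemma Iseq_length (n : ℕ) : (Iseq n).length = n := by
  simp [Iseq]; omega

lemma diffSet_nonempty (n : ℕ) :
    Set.Nonempty {d | ∃ I : List ℕ, I.length = n ∧ d = naiP I - eagP I} :=
  ⟨naiP (List.replicate n 0) - eagP (List.replicate n 0),
    List.replicate n 0, by simp, rfl⟩

lemma diffSet_bddAbove (n : ℕ) :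
    (n : ℝ) ∈ upperBounds {d | ∃ I : List ℕ, I.length = n ∧ d = naiP I - eagP I} := by
  rintro d ⟨I, hlen, rfl⟩
  have := diff_le_length I
  rw [hlen] at this
  exact this

lemma diffSet_bddBelow (n : ℕ) :
    (-((n : ℝ) / 4)) ∈ lowerBounds {d | ∃ I : List ℕ, I.length = n ∧ d = naiP I - eagP I} := by
  rintro d ⟨I, hlen, rfl⟩
  have := diff_ge_neg_quarter I
  rw [hlen] at this
  exact this

lemma maxDiff_le (n : ℕ) : maxDiff naiP eagP n ≤ n :=
  csSup_le (diffSet_nonempty n) (fun _ hb => diffSet_bddAbove n hb)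

lemma maxDiff_ge (n : ℕ) (hn : 2 ≤ n) :
    (((n : ℝ) - 2) ^ 2 + 4) / n - 2 ≤ maxDiff naiP eagP n :=
  le_csSup ⟨n, diffSet_bddAbove n⟩
    ⟨Eseq n 1 0, Eseq_length n hn, (diff_Eseq n hn).symm⟩

lemma minDiff_ge (n : ℕ) : -((n : ℝ) / 4) ≤ minDiff naiP eagP n :=
  le_csInf (diffSet_nonempty n) (fun _ hb => diffSet_bddBelow n hb)

lemma minDiff_le (n : ℕ) (hn : 3 ≤ n) :
    minDiff naiP eagP n ≤ -(((n / 2 : ℕ) : ℝ) * (((n + 1) / 2 : ℕ) - 1)) / n :=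
  csInf_le ⟨-((n : ℝ) / 4), diffSet_bddBelow n⟩
    ⟨Iseq n, Iseq_length n, (diff_Iseq n hn).symm⟩

lemma minDiff_le' (n : ℕ) (hn : 3 ≤ n) :
    minDiff naiP eagP n ≤ -((n : ℝ) / 4) + 3 / 4 := by
  refine (minDiff_le n hn).trans ?_
  have hn0 : (0 : ℝ) < n := by
    have : 0 < n := by omega
    exact_mod_cast this
  have hk : (n : ℝ) ≤ 2 * ((n / 2 : ℕ) : ℝ) + 1 := by
    exact_mod_cast (by omega : n ≤ 2 * (n / 2) + 1)
  have hc : (n : ℝ) ≤ 2 * (((n + 1) / 2 : ℕ) : ℝ) := by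
    exact_mod_cast (by omega : n ≤ 2 * ((n + 1) / 2))
  have hK0 : (0 : ℝ) ≤ ((n / 2 : ℕ) : ℝ) := by positivity
  have hC1 : (1 : ℝ) ≤ (((n + 1) / 2 : ℕ) : ℝ) := by
    exact_mod_cast (by omega : 1 ≤ (n + 1) / 2)
  have hn3 : (3 : ℝ) ≤ (n : ℝ) := by exact_mod_cast hn
  rw [div_le_iff₀ hn0]
  nlinarith [mul_le_mul (by linarith : (n : ℝ) - 1 ≤ 2 * ((n / 2 : ℕ) : ℝ))
    (by linarith : (n : ℝ) - 2 ≤ 2 * (((n + 1) / 2 : ℕ) : ℝ) - 2)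
    (by linarith) (by linarith)]

end FinalAux

/-- the relative interval of Nai versus Eag is [−1/4, 1]. -/
theorem stmt13 :
    Filter.limsup (fun n => maxDiff naiP eagP n / (n : ℝ)) Filter.atTop = 1 ∧
    Filter.liminf (fun n => minDiff naiP eagP n / (n : ℝ)) Filter.atTop = -(1 / 4) := by
  have hmax : Filter.Tendsto (fun n => maxDiff naiP eagP n / (n : ℝ))
      Filter.atTop (nhds 1) := by
    apply tendsto_of_tendsto_of_tendsto_of_le_of_le'
      (g := fun n : ℕ => 1 - 6 * (1 / (n : ℝ))) (h := fun _ : ℕ => (1 : ℝ))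
    · have : Filter.Tendsto (fun n : ℕ => 1 - 6 * (1 / (n : ℝ)))
          Filter.atTop (nhds (1 - 6 * 0)) :=
        tendsto_const_nhds.sub (tendsto_one_div_atTop_nhds_zero_nat.const_mul 6)
      simpa using this
    · exact tendsto_const_nhds
    · filter_upwards [Filter.eventually_ge_atTop 2] with n hn
      have hn0 : (0 : ℝ) < n := by exact_mod_cast (by omega : 0 < n)
      have h1 : (n : ℝ) - 6 ≤ maxDiff naiP eagP n := by
        refine le_trans ?_ (maxDiff_ge n hn)
        rw [le_sub_iff_add_le, le_div_iff₀ hn0]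
        nlinarith
      have h2 : ((n : ℝ) - 6) / n ≤ maxDiff naiP eagP n / n := by gcongr
      have h3 : 1 - 6 * (1 / (n : ℝ)) = ((n : ℝ) - 6) / n := by
        field_simp
      rw [h3]; exact h2
    · filter_upwards [Filter.eventually_ge_atTop 1] with n hn
      have hn0 : (0 : ℝ) < n := by exact_mod_cast (by omega : 0 < n)
      have h1 := maxDiff_le n
      calc maxDiff naiP eagP n / n ≤ (n : ℝ) / n := by gcongr
        _ = 1 := div_self hn0.ne'
  have hmin : Filter.Tendsto (fun n => minDiff naiP eagP n / (n : ℝ))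
      Filter.atTop (nhds (-(1 / 4))) := by
    apply tendsto_of_tendsto_of_tendsto_of_le_of_le'
      (g := fun _ : ℕ => (-(1 / 4) : ℝ))
      (h := fun n : ℕ => -(1 / 4) + (3 / 4) * (1 / (n : ℝ)))
    · exact tendsto_const_nhds
    · have : Filter.Tendsto (fun n : ℕ => -(1 / 4) + (3 / 4) * (1 / (n : ℝ)))
          Filter.atTop (nhds (-(1 / 4) + (3 / 4) * 0)) :=
        tendsto_const_nhds.add (tendsto_one_div_atTop_nhds_zero_nat.const_mul (3 / 4))
      simpa using this
    · filter_upwards [Filter.eventually_ge_atTop 1] with n hn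
      have hn0 : (0 : ℝ) < n := by exact_mod_cast (by omega : 0 < n)
      have h := minDiff_ge n
      rw [le_div_iff₀ hn0]
      linarith
    · filter_upwards [Filter.eventually_ge_atTop 3] with n hn
      have hn0 : (0 : ℝ) < n := by exact_mod_cast (by omega : 0 < n)
      have h := minDiff_le' n hn
      rw [div_le_iff₀ hn0]
      have heq : (-(1 / 4) + (3 / 4) * (1 / (n : ℝ))) * n = -((n : ℝ) / 4) + 3 / 4 := by
        field_simp
      rw [heq]; exact h
  exact ⟨hmax.limsup_eq, hmin.liminf_eq⟩
end

section
/- For every sequence I of length n, Nai(I) − Maj_W(I) ≤ p − p²/n ≤ n/4, where p is the number of occurrences of the most frequent item and Maj_W is Maj's profit on its worst permutation of I; equality n/4 − O(1) is achieved on W_n. Hence Max(Nai, Maj) = 1/4 in relative interval analysis. -/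
open scoped BigOperators

namespace Stmt14Aux

open List Finset

/-- Buffers of Majority started from an arbitrary state. -/
def bufsFrom (s : ℕ × ℕ) (J : List ℕ) : List ℕ :=
  ((List.scanl majStep s J).tail).map Prod.fst

lemma majBuffers_eq (J : List ℕ) : majBuffers J = bufsFrom (0, 0) J := rfl

lemma bufsFrom_nil (s : ℕ × ℕ) : bufsFrom s [] = [] := rfl

lemma bufsFrom_cons (s : ℕ × ℕ) (x : ℕ) (J : List ℕ) :
    bufsFrom s (x :: J) = (majStep s x).1 :: bufsFrom (majStep s x) J := by
  cases J <;> simp [bufsFrom, List.scanl]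

lemma length_bufsFrom (s : ℕ × ℕ) (J : List ℕ) : (bufsFrom s J).length = J.length := by
  simp [bufsFrom, List.length_tail, List.length_scanl]

lemma length_majBuffers (J : List ℕ) : (majBuffers J).length = J.length :=
  length_bufsFrom _ _

lemma count_bufsFrom_le (a : ℕ) : ∀ (J : List ℕ) (s : ℕ × ℕ),
    (bufsFrom s J).count a ≤ 2 * J.count a + (if s.1 = a then s.2 else 0) := by
  intro J
  induction J with
  | nil => intro s; simp [bufsFrom_nil]
  | cons x J ih =>
    intro s
    obtain ⟨b, c⟩ := s
    have h := ih (majStep (b, c) x)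
    rw [bufsFrom_cons]
    rw [List.count_cons, List.count_cons]
    simp only [majStep, beq_iff_eq] at h ⊢
    by_cases hc : c = 0 <;> by_cases hxb : x = b <;> by_cases hxa : x = a <;>
      by_cases hba : b = a <;>
      simp only [hc, hxb, hxa, hba, if_true, if_false, ite_true, ite_false] at h ⊢ <;>
      simp_all <;> omega

lemma count_majBuffers_le (J : List ℕ) (a : ℕ) :
    (majBuffers J).count a ≤ 2 * J.count a := by
  have h := count_bufsFrom_le a J (0, 0)
  rw [majBuffers_eq]
  simpa using h

lemma mem_bufsFrom : ∀ (J : List ℕ) (s : ℕ × ℕ) (b : ℕ),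
    b ∈ bufsFrom s J → b ∈ J ∨ (b = s.1 ∧ s.2 ≠ 0) := by
  intro J
  induction J with
  | nil => intro s b hb; simp [bufsFrom_nil] at hb
  | cons x J ih =>
    intro s b hb
    rw [bufsFrom_cons] at hb
    rcases List.mem_cons.mp hb with h | h
    · obtain ⟨b1, c⟩ := s
      simp only [majStep] at h
      by_cases hc : c = 0
      · simp [hc] at h; subst h; left; exact List.mem_cons_self
      · simp [hc] at h
        by_cases hx : x = b1 <;> simp [hx] at h <;> right <;> exact ⟨h, hc⟩
    · rcases ih (majStep s x) b h with h2 | ⟨h2, h3⟩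
      · left; exact List.mem_cons_of_mem _ h2
      · obtain ⟨b1, c⟩ := s
        simp only [majStep] at h2 h3
        by_cases hc : c = 0
        · simp [hc] at h2 h3; left; subst h2; exact List.mem_cons_self
        · by_cases hx : x = b1 <;> simp [hc, hx] at h2 h3 <;> right <;> exact ⟨h2, hc⟩

lemma mem_of_mem_majBuffers {J : List ℕ} {b : ℕ} (hb : b ∈ majBuffers J) : b ∈ J := by
  rw [majBuffers_eq] at hb
  rcases mem_bufsFrom J (0, 0) b hb with h | ⟨_, h⟩
  · exact h
  · exact absurd rfl h

end Stmt14Aux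

namespace Stmt14Aux

open List Finset

lemma lemB (s : Finset ℕ) (f g : ℕ → ℝ) (p N : ℝ) (a0 : ℕ) (ha0 : a0 ∈ s)
    (hf0 : ∀ a ∈ s, 0 ≤ f a) (hfp : ∀ a ∈ s, f a ≤ p)
    (hg0 : ∀ a ∈ s, 0 ≤ g a) (hg2 : ∀ a ∈ s, g a ≤ 2 * f a)
    (hfs : ∑ a ∈ s, f a = N) (hgs : ∑ a ∈ s, g a = N) (hfa0 : f a0 = p) :
    ∑ a ∈ s, (f a - g a) * f a ≤ p * (N - p) := by
  classical
  set t := s.filter (fun a => g a < f a) with ht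
  set t' := s.filter (fun a => ¬ g a < f a) with ht'
  have hts : t ⊆ s := Finset.filter_subset _ _
  have ht's : t' ⊆ s := Finset.filter_subset _ _
  have hp0 : 0 ≤ p := hfa0 ▸ hf0 a0 ha0
  have hsplit : ∑ a ∈ t, (f a - g a) * f a + ∑ a ∈ t', (f a - g a) * f a
      = ∑ a ∈ s, (f a - g a) * f a :=
    Finset.sum_filter_add_sum_filter_not s _ _
  have hneg : ∑ a ∈ t', (f a - g a) * f a ≤ 0 := by
    apply Finset.sum_nonpos
    intro a ha
    have h1 : ¬ g a < f a := (Finset.mem_filter.mp ha).2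
    have h2 := hf0 a (ht's ha)
    nlinarith
  have hpos : ∑ a ∈ t, (f a - g a) * f a ≤ p * ∑ a ∈ t, (f a - g a) := by
    rw [Finset.mul_sum]
    apply Finset.sum_le_sum
    intro a ha
    have h1 : g a < f a := (Finset.mem_filter.mp ha).2
    have h2 := hfp a (hts ha)
    nlinarith
  have hzero : ∑ a ∈ t, (f a - g a) + ∑ a ∈ t', (f a - g a) = 0 := by
    rw [Finset.sum_filter_add_sum_filter_not s (fun a => g a < f a) (fun a => f a - g a),
      Finset.sum_sub_distrib, hfs, hgs]
    ring
  have hsplitf : ∑ a ∈ t, f a + ∑ a ∈ t', f a = N := by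
    rw [Finset.sum_filter_add_sum_filter_not, hfs]
  have hP : ∑ a ∈ t, (f a - g a) ≤ N - p := by
    by_cases hc : a0 ∈ t
    · have hQ : ∑ a ∈ t', (-(f a)) ≤ ∑ a ∈ t', (f a - g a) := by
        apply Finset.sum_le_sum
        intro a ha
        have := hg2 a (ht's ha)
        linarith
      have hQ' : - ∑ a ∈ t', f a ≤ ∑ a ∈ t', (f a - g a) := by
        rw [← Finset.sum_neg_distrib]
        exact hQ
      have hsingle : p ≤ ∑ a ∈ t, f a := by
        rw [← hfa0]
        exact Finset.single_le_sum (fun a ha => hf0 a (hts ha)) hc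
      linarith
    · have hc' : a0 ∈ t' := by
        rw [ht', Finset.mem_filter]
        refine ⟨ha0, ?_⟩
        intro hlt
        exact hc (Finset.mem_filter.mpr ⟨ha0, hlt⟩)
      have hP1 : ∑ a ∈ t, (f a - g a) ≤ ∑ a ∈ t, f a := by
        apply Finset.sum_le_sum
        intro a ha
        have := hg0 a (hts ha)
        linarith
      have hsingle : p ≤ ∑ a ∈ t', f a := by
        rw [← hfa0]
        exact Finset.single_le_sum (fun a ha => hf0 a (ht's ha)) hc'
      linarith
  nlinarith

lemma profit_eq_sum (I S : List ℕ) :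
    profit I S = ∑ a ∈ S.toFinset, (S.count a : ℝ) * freq I a := by
  unfold profit
  rw [Finset.sum_list_map_count]
  simp [nsmul_eq_mul]

lemma majP_nonneg (J : List ℕ) : 0 ≤ majP J := by
  unfold majP profit
  apply List.sum_nonneg
  intro x hx
  rcases List.mem_map.mp hx with ⟨b, _, rfl⟩
  unfold freq
  positivity

lemma core (I J : List ℕ) (hJ : J.Perm I) (a0 : ℕ) (ha0 : a0 ∈ I) (p : ℕ)
    (hp : I.count a0 = p) (hmax : ∀ b ∈ I, I.count b ≤ p) :
    naiP I - majP J ≤ (p : ℝ) - (p : ℝ) ^ 2 / (I.length : ℝ) := by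
  classical
  have hn : 0 < I.length := List.length_pos_iff.mpr (List.ne_nil_of_mem ha0)
  have hnR : (0 : ℝ) < (I.length : ℝ) := by exact_mod_cast hn
  set n : ℝ := (I.length : ℝ) with hndef
  set B := majBuffers J with hB
  set u : Finset ℕ := I.toFinset ∪ B.toFinset with hu
  have hvanI : ∀ a ∈ u, a ∉ I.toFinset → (I.count a : ℝ) * ((I.count a : ℝ) / n) = 0 := by
    intro a _ ha
    have : I.count a = 0 := List.count_eq_zero.mpr (fun h => ha (List.mem_toFinset.mpr h))
    simp [this]
  have h1 : naiP I = ∑ a ∈ u, (I.count a : ℝ) * ((I.count a : ℝ) / n) := by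
    unfold naiP
    rw [profit_eq_sum]
    have : ∀ a ∈ I.toFinset, (I.count a : ℝ) * freq I a
        = (I.count a : ℝ) * ((I.count a : ℝ) / n) := by
      intro a _; rfl
    rw [Finset.sum_congr rfl this]
    exact Finset.sum_subset Finset.subset_union_left hvanI
  have hfreqJ : ∀ a, freq J a = (I.count a : ℝ) / n := by
    intro a
    unfold freq
    rw [hJ.count_eq a, hJ.length_eq]
  have h2 : majP J = ∑ a ∈ u, (B.count a : ℝ) * ((I.count a : ℝ) / n) := by
    unfold majP
    rw [← hB, profit_eq_sum]
    have : ∀ a ∈ B.toFinset, (B.count a : ℝ) * freq J a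
        = (B.count a : ℝ) * ((I.count a : ℝ) / n) := by
      intro a _; rw [hfreqJ]
    rw [Finset.sum_congr rfl this]
    refine Finset.sum_subset Finset.subset_union_right ?_
    intro a _ ha
    have : B.count a = 0 := List.count_eq_zero.mpr (fun h => ha (List.mem_toFinset.mpr h))
    simp [this]
  have hfs : ∑ a ∈ u, (I.count a : ℝ) = n := by
    rw [hndef]
    rw [← Nat.cast_sum]
    congr 1
    rw [← List.sum_toFinset_count_eq_length I]
    refine (Finset.sum_subset Finset.subset_union_left ?_).symm
    intro a _ ha
    exact List.count_eq_zero.mpr (fun h => ha (List.mem_toFinset.mpr h))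
  have hgs : ∑ a ∈ u, (B.count a : ℝ) = n := by
    rw [hndef]
    rw [← Nat.cast_sum]
    have hBlen : B.length = I.length := by
      rw [hB, length_majBuffers, hJ.length_eq]
    rw [← hBlen]
    congr 1
    rw [← List.sum_toFinset_count_eq_length B]
    refine (Finset.sum_subset Finset.subset_union_right ?_).symm
    intro a _ ha
    exact List.count_eq_zero.mpr (fun h => ha (List.mem_toFinset.mpr h))
  have key : ∑ a ∈ u, ((I.count a : ℝ) - (B.count a : ℝ)) * (I.count a : ℝ)
      ≤ (p : ℝ) * (n - (p : ℝ)) := by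
    refine lemB u (fun a => (I.count a : ℝ)) (fun a => (B.count a : ℝ)) p n a0
      (Finset.mem_union_left _ (List.mem_toFinset.mpr ha0))
      (fun a _ => Nat.cast_nonneg _) ?_ (fun a _ => Nat.cast_nonneg _) ?_ hfs hgs ?_
    · intro a _
      show (I.count a : ℝ) ≤ (p : ℝ)
      by_cases h : a ∈ I
      · exact_mod_cast hmax a h
      · simp [List.count_eq_zero_of_not_mem h]
    · intro a _
      show (B.count a : ℝ) ≤ 2 * (I.count a : ℝ)
      have h1 := count_majBuffers_le J a
      have h2 : J.count a = I.count a := hJ.count_eq a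
      rw [h2] at h1
      rw [← hB] at h1
      exact_mod_cast h1
    · show (I.count a0 : ℝ) = (p : ℝ)
      exact_mod_cast hp
  have hdiff : naiP I - majP J
      = (∑ a ∈ u, ((I.count a : ℝ) - (B.count a : ℝ)) * (I.count a : ℝ)) / n := by
    rw [h1, h2, Finset.sum_div, ← Finset.sum_sub_distrib]
    refine Finset.sum_congr rfl (fun a _ => ?_)
    ring
  rw [hdiff]
  have heq : (p : ℝ) - (p : ℝ) ^ 2 / n = ((p : ℝ) * (n - (p : ℝ))) / n := by
    field_simp
  rw [heq]
  exact (div_le_div_iff_of_pos_right hnR).mpr key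

lemma ineq2 (p n : ℝ) (hn : 0 < n) : p - p ^ 2 / n ≤ n / 4 := by
  have hq : p ^ 2 / n * n = p ^ 2 := div_mul_cancel₀ _ hn.ne'
  nlinarith [sq_nonneg (n - 2 * p), hn]

end Stmt14Aux

namespace Stmt14Aux

open List Finset

def myW (k : ℕ) : List ℕ := (List.range k).flatMap (fun i => [i + 1, 0])

lemma Wseq_even {n : ℕ} (hn : Even n) : Wseq n = myW (n / 2) := by
  have h2 : n % 2 = 0 := Nat.even_iff.mp hn
  simp [Wseq, myW, h2]

lemma myW_succ (k : ℕ) : myW (k + 1) = myW k ++ [k + 1, 0] := by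
  simp [myW, List.range_succ]

lemma myW_length (k : ℕ) : (myW k).length = 2 * k := by
  induction k with
  | zero => rfl
  | succ k ih => rw [myW_succ]; simp [ih]; omega

lemma myW_count0 (k : ℕ) : (myW k).count 0 = k := by
  induction k with
  | zero => rfl
  | succ k ih => rw [myW_succ]; simp [List.count_append, ih, List.count_cons]

lemma myW_count_pos (k a : ℕ) (ha : a ≠ 0) :
    (myW k).count a = if a ≤ k then 1 else 0 := by
  induction k with
  | zero => simp [myW, Nat.le_zero, ha]
  | succ k ih =>
    rw [myW_succ, List.count_append, ih, List.count_cons, List.count_cons]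
    simp only [List.count_nil, beq_iff_eq]
    split_ifs <;> omega

lemma myW_map_sum (k : ℕ) (g : ℕ → ℝ) :
    ((myW k).map g).sum = ∑ i ∈ Finset.range k, (g (i + 1) + g 0) := by
  induction k with
  | zero => simp [myW]
  | succ k ih =>
    rw [myW_succ]
    simp [Finset.sum_range_succ, ih]

lemma dbl_map_sum (k : ℕ) (g : ℕ → ℝ) :
    (((List.range k).flatMap (fun i => [i + 1, i + 1])).map g).sum
      = ∑ i ∈ Finset.range k, 2 * g (i + 1) := by
  induction k with
  | zero => simp
  | succ k ih =>
    rw [List.range_succ]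
    simp [Finset.sum_range_succ, ih]
    ring

lemma bufs_range' (m : ℕ) : ∀ (j : ℕ) (s : ℕ × ℕ), s.2 = 0 →
    bufsFrom s ((List.range' j m).flatMap (fun i => [i + 1, 0])) =
      (List.range' j m).flatMap (fun i => [i + 1, i + 1]) := by
  induction m with
  | zero => intro j s _; rfl
  | succ m ih =>
    intro j s hs
    obtain ⟨b, c⟩ := s
    simp only at hs
    subst hs
    rw [List.range'_succ, List.flatMap_cons, List.flatMap_cons]
    have h1 : majStep (b, 0) (j + 1) = (j + 1, 1) := by simp [majStep]
    have h2 : majStep (j + 1, 1) 0 = (j + 1, 0) := by simp [majStep]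
    simp only [List.cons_append, List.nil_append]
    rw [bufsFrom_cons, h1, bufsFrom_cons, h2]
    rw [ih (j + 1) (j + 1, 0) rfl]

lemma majBuffers_myW (k : ℕ) :
    majBuffers (myW k) = (List.range k).flatMap (fun i => [i + 1, i + 1]) := by
  rw [majBuffers_eq, myW, List.range_eq_range', bufs_range' k 0 (0, 0) rfl,
    ← List.range_eq_range']

lemma naiP_myW (k : ℕ) (hk : 0 < k) : naiP (myW k) = ((k : ℝ) + 1) / 2 := by
  have hkR : (0 : ℝ) < (k : ℝ) := by exact_mod_cast hk
  have hlen : ((myW k).length : ℝ) = 2 * (k : ℝ) := by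
    rw [myW_length]; push_cast; ring
  unfold naiP profit
  rw [myW_map_sum]
  have hterm : ∀ i ∈ Finset.range k, freq (myW k) (i + 1) + freq (myW k) 0
      = 1 / (2 * (k : ℝ)) + (k : ℝ) / (2 * (k : ℝ)) := by
    intro i hi
    unfold freq
    rw [myW_count0, myW_count_pos k (i + 1) (Nat.succ_ne_zero i), if_pos, hlen]
    · norm_num
    · exact Nat.succ_le_of_lt (Finset.mem_range.mp hi)
  rw [Finset.sum_congr rfl hterm, Finset.sum_const, Finset.card_range, nsmul_eq_mul]
  field_simp
  ring

lemma majP_myW (k : ℕ) (hk : 0 < k) : majP (myW k) = 1 := by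
  have hkR : (0 : ℝ) < (k : ℝ) := by exact_mod_cast hk
  have hlen : ((myW k).length : ℝ) = 2 * (k : ℝ) := by
    rw [myW_length]; push_cast; ring
  unfold majP profit
  rw [majBuffers_myW, dbl_map_sum]
  have hterm : ∀ i ∈ Finset.range k, 2 * freq (myW k) (i + 1)
      = 2 * (1 / (2 * (k : ℝ))) := by
    intro i hi
    unfold freq
    rw [myW_count_pos k (i + 1) (Nat.succ_ne_zero i),
      if_pos (Nat.succ_le_of_lt (Finset.mem_range.mp hi)), hlen]
    norm_num
  rw [Finset.sum_congr rfl hterm, Finset.sum_const, Finset.card_range, nsmul_eq_mul]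
  field_simp

lemma majP_ge_one {J : List ℕ} (hJ : J ≠ []) : 1 ≤ majP J := by
  have hn : 0 < J.length := List.length_pos_iff.mpr hJ
  have hnR : (0 : ℝ) < (J.length : ℝ) := by exact_mod_cast hn
  have h : ∀ b ∈ majBuffers J, (fun _ : ℕ => (1 : ℝ) / (J.length : ℝ)) b ≤ freq J b := by
    intro b hb
    have hbJ : b ∈ J := mem_of_mem_majBuffers hb
    have hcount : 1 ≤ J.count b := List.count_pos_iff.mpr hbJ
    unfold freq
    exact (div_le_div_iff_of_pos_right hnR).mpr (by exact_mod_cast hcount)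
  have h2 := List.sum_le_sum h
  have h3 : ((majBuffers J).map (fun _ : ℕ => (1 : ℝ) / (J.length : ℝ))).sum = 1 := by
    rw [List.map_const', List.sum_replicate, length_majBuffers, nsmul_eq_mul]
    field_simp
  unfold majP profit
  rw [← h3]
  exact h2

lemma worstP_myW (k : ℕ) (hk : 0 < k) : worstP majP (myW k) = 1 := by
  unfold worstP
  apply _root_.le_antisymm
  · apply csInf_le
    · exact ⟨0, by rintro x ⟨J, hJ, rfl⟩; exact majP_nonneg J⟩
    · exact ⟨myW k, List.Perm.refl _, (majP_myW k hk).symm⟩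
  · refine le_csInf ⟨majP (myW k), myW k, List.Perm.refl _, rfl⟩ ?_
    rintro x ⟨J, hJ, rfl⟩
    apply majP_ge_one
    intro hnil
    have := hJ.length_eq
    rw [hnil, myW_length] at this
    simp at this
    omega

end Stmt14Aux

namespace Stmt14Aux

open List Finset

lemma diff_le (n : ℕ) (hn : 0 < n) :
    ∀ x ∈ {d | ∃ I : List ℕ, I.length = n ∧ d = naiP I - majP I}, x ≤ (n : ℝ) / 4 := by
  rintro x ⟨I, hlen, rfl⟩
  have hne : I ≠ [] := by
    intro h
    rw [h] at hlen
    simp at hlen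
    omega
  have hfin : I.toFinset.Nonempty := by
    obtain ⟨a, ha⟩ := List.exists_mem_of_ne_nil I hne
    exact ⟨a, List.mem_toFinset.mpr ha⟩
  obtain ⟨a0, ha0, hmax⟩ := Finset.exists_max_image I.toFinset I.count hfin
  have h1 := core I I (List.Perm.refl I) a0 (List.mem_toFinset.mp ha0) (I.count a0) rfl
    (fun b hb => hmax b (List.mem_toFinset.mpr hb))
  have hnR : (0 : ℝ) < (I.length : ℝ) := by
    rw [hlen]; exact_mod_cast hn
  have h2 := ineq2 ((I.count a0 : ℝ)) ((I.length : ℝ)) hnR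
  rw [hlen] at h1 h2
  linarith

lemma maxDiff_le (n : ℕ) (hn : 0 < n) : maxDiff naiP majP n ≤ (n : ℝ) / 4 := by
  unfold maxDiff
  exact Real.sSup_le (diff_le n hn) (by positivity)

lemma maxDiff_ge (k : ℕ) (hk : 0 < k) :
    (k : ℝ) / 2 - 1 / 2 ≤ maxDiff naiP majP (2 * k) := by
  unfold maxDiff
  have hmem : naiP (myW k) - majP (myW k)
      ∈ {d | ∃ I : List ℕ, I.length = 2 * k ∧ d = naiP I - majP I} :=
    ⟨myW k, myW_length k, rfl⟩
  have hb : BddAbove {d | ∃ I : List ℕ, I.length = 2 * k ∧ d = naiP I - majP I} :=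
    ⟨((2 * k : ℕ) : ℝ) / 4, fun x hx => diff_le (2 * k) (by omega) x hx⟩
  have h := le_csSup hb hmem
  rw [naiP_myW k hk, majP_myW k hk] at h
  linarith

end Stmt14Aux
/-- Nai(I) − Maj_W(I) ≤ p − p²/n ≤ n/4 where p is the number of
occurrences of the most frequent item; equality up to O(1) on W_n; hence
Max(Nai, Maj) = 1/4 in relative interval analysis. -/
theorem stmt14 :
    (∀ (I : List ℕ) (p : ℕ), (∃ a ∈ I, I.count a = p) → (∀ b ∈ I, I.count b ≤ p) →
      naiP I - worstP majP I ≤ (p : ℝ) - (p : ℝ) ^ 2 / I.length ∧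
      (p : ℝ) - (p : ℝ) ^ 2 / I.length ≤ (I.length : ℝ) / 4) ∧
    (∀ n : ℕ, Even n → 2 ≤ n →
      naiP (Wseq n) - worstP majP (Wseq n) = (n : ℝ) / 4 - 1 / 2) ∧
    Filter.limsup (fun n => maxDiff naiP majP n / (n : ℝ)) Filter.atTop = 1 / 4 := by
  classical
  refine ⟨?_, ?_, ?_⟩
  · rintro I p ⟨a, haI, hap⟩ hmax
    have hn : 0 < I.length := List.length_pos_iff.mpr (List.ne_nil_of_mem haI)
    have hnR : (0 : ℝ) < (I.length : ℝ) := by exact_mod_cast hn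
    constructor
    · have hw : naiP I - ((p : ℝ) - (p : ℝ) ^ 2 / I.length) ≤ worstP majP I := by
        unfold worstP
        refine le_csInf ⟨majP I, I, List.Perm.refl I, rfl⟩ ?_
        rintro x ⟨J, hJ, rfl⟩
        have := Stmt14Aux.core I J hJ a haI p hap hmax
        linarith
      linarith
    · exact Stmt14Aux.ineq2 _ _ hnR
  · intro n hev hn2
    have h2 : n % 2 = 0 := Nat.even_iff.mp hev
    set k : ℕ := n / 2 with hkdef
    have hk : n = 2 * k := by omega
    have hkpos : 0 < k := by omega
    have hW : Wseq n = Stmt14Aux.myW k := Stmt14Aux.Wseq_even hev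
    rw [hW, Stmt14Aux.naiP_myW k hkpos, Stmt14Aux.worstP_myW k hkpos]
    have hcast : (n : ℝ) = 2 * (k : ℝ) := by rw [hk]; push_cast; ring
    rw [hcast]
    ring
  · set u : ℕ → ℝ := fun n => maxDiff naiP majP n / (n : ℝ) with hu
    have hub : ∀ᶠ n in Filter.atTop, u n ≤ 1 / 4 := by
      filter_upwards [Filter.eventually_ge_atTop 1] with n hn
      have hnR : (0 : ℝ) < (n : ℝ) := by exact_mod_cast hn
      have h := Stmt14Aux.maxDiff_le n hn
      show maxDiff naiP majP n / (n : ℝ) ≤ 1 / 4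
      calc maxDiff naiP majP n / (n : ℝ) ≤ ((n : ℝ) / 4) / (n : ℝ) :=
            (div_le_div_iff_of_pos_right hnR).mpr h
        _ = 1 / 4 := by field_simp
    have hfreq : ∀ ε : ℝ, 0 < ε → ∃ᶠ n in Filter.atTop, 1 / 4 - ε ≤ u n := by
      intro ε hε
      rw [Filter.frequently_atTop]
      intro N
      set M : ℕ := max (max N 1) ⌈1 / (4 * ε)⌉₊ with hM
      have hMN : N ≤ M := le_trans (le_max_left N 1) (le_max_left _ _)
      have hM1 : 1 ≤ M := le_trans (le_max_right N 1) (le_max_left _ _)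
      refine ⟨2 * M, by omega, ?_⟩
      have hMR : (0 : ℝ) < (M : ℝ) := by exact_mod_cast hM1
      have hMe : 1 / (4 * ε) ≤ (M : ℝ) := le_trans (Nat.le_ceil _)
        (by exact_mod_cast le_max_right (max N 1) ⌈1 / (4 * ε)⌉₊)
      have h1 : (1 : ℝ) ≤ ε * (4 * (M : ℝ)) := by
        rw [div_le_iff₀ (by positivity)] at hMe
        nlinarith
      have h2 := Stmt14Aux.maxDiff_ge M hM1
      have hlen : ((2 * M : ℕ) : ℝ) = 2 * (M : ℝ) := by push_cast; ring
      have h3 : ((M : ℝ) / 2 - 1 / 2) / (2 * (M : ℝ)) ≤ u (2 * M) := by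
        show ((M : ℝ) / 2 - 1 / 2) / (2 * (M : ℝ))
          ≤ maxDiff naiP majP (2 * M) / ((2 * M : ℕ) : ℝ)
        rw [hlen]
        exact (div_le_div_iff_of_pos_right (by positivity)).mpr h2
      have h5 : 1 / 4 - ε ≤ ((M : ℝ) / 2 - 1 / 2) / (2 * (M : ℝ)) := by
        rw [le_div_iff₀ (by positivity)]
        nlinarith
      linarith
    have hbdd : Filter.IsBoundedUnder (· ≤ ·) Filter.atTop u :=
      Filter.isBoundedUnder_of_eventually_le hub
    have hcb : Filter.IsCoboundedUnder (· ≤ ·) Filter.atTop u :=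
      Filter.IsCoboundedUnder.of_frequently_ge (hfreq 1 one_pos)
    apply _root_.le_antisymm
    · exact Filter.limsup_le_of_le hcb hub
    · by_contra hcon
      push_neg at hcon
      have hε : 0 < (1 / 4 - Filter.limsup u Filter.atTop) / 2 := by linarith
      have := Filter.le_limsup_of_frequently_le (hfreq _ hε) hbdd
      linarith
end
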